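/- arXiv:math/0505144 — 3 statements merged into one kernel-verified Lean document; each statement's English description precedes it below -/
import Mathlib

section
/- Let 0<α<1, k∈ℤ, and 0<A<1. Then there exists a constant C>0 such that for every measurable function f:(0,A)→ℂ with ∫₀^A |f(ρ)|² |log ρ|^k ρ^{1+α} dρ < ∞, the function u(r) := -2 ∫_r^A f(ρ) dρ is well defined for every r∈(0,A) and satisfies ∫₀^A |u(r)|² |log r|^{k-2} r^{-1+α} dr ≤ C ∫₀^A |f(ρ)|² |log ρ|^k ρ^{1+α} dρ. -/
open MeasureTheory Set Real

lemma my_logcmp (α : ℝ) (hα0 : 0 < α) (k : ℤ) (A : ℝ) (hA0 : 0 < A) (hA1 : A < 1) :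
    ∃ C₁ : ℝ, 0 < C₁ ∧ ∀ r ρ : ℝ, 0 < r → r ≤ ρ → ρ ≤ A →
      (-Real.log ρ) ^ (-(k : ℝ)) ≤ C₁ * ((-Real.log r) ^ (-(k : ℝ)) * (ρ / r) ^ (α / 2)) := by
  have hLA : 0 < -Real.log A := by
    have := Real.log_neg hA0 hA1; linarith
  rcases le_or_gt k 0 with hk | hk
  · refine ⟨1, one_pos, fun r ρ hr hrρ hρA => ?_⟩
    have hρ0 : 0 < ρ := lt_of_lt_of_le hr hrρ
    have hLρ : 0 < -Real.log ρ := by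
      have := Real.log_neg hρ0 (lt_of_le_of_lt hρA hA1); linarith
    have hLr : -Real.log ρ ≤ -Real.log r := by
      have := Real.log_le_log hr hrρ; linarith
    have h1 : (-Real.log ρ) ^ (-(k : ℝ)) ≤ (-Real.log r) ^ (-(k : ℝ)) := by
      apply Real.rpow_le_rpow hLρ.le hLr
      simp only [neg_nonneg]
      exact_mod_cast hk
    have h2 : (1 : ℝ) ≤ (ρ / r) ^ (α / 2) :=
      Real.one_le_rpow ((one_le_div hr).2 hrρ) (by linarith)
    calc (-Real.log ρ) ^ (-(k : ℝ)) ≤ (-Real.log r) ^ (-(k : ℝ)) := h1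
      _ ≤ (-Real.log r) ^ (-(k : ℝ)) * (ρ / r) ^ (α / 2) := by
          nlinarith [Real.rpow_nonneg (by linarith : (0:ℝ) ≤ -Real.log r) (-(k:ℝ))]
      _ = 1 * ((-Real.log r) ^ (-(k : ℝ)) * (ρ / r) ^ (α / 2)) := by ring
  · set n : ℕ := k.toNat with hn
    have hnk : (n : ℝ) = (k : ℝ) := by
      rw [hn]; exact_mod_cast Int.toNat_of_nonneg hk.le
    have hnpos : 0 < (n : ℝ) := by rw [hnk]; exact_mod_cast hk
    set c : ℝ := (-Real.log A)⁻¹ with hc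
    set δ : ℝ := α / (2 * n) with hδ
    have hδpos : 0 < δ := by positivity
    refine ⟨(1 + c / δ) ^ n, by positivity, fun r ρ hr hrρ hρA => ?_⟩
    have hρ0 : 0 < ρ := lt_of_lt_of_le hr hrρ
    have hLρ : 0 < -Real.log ρ := by
      have := Real.log_neg hρ0 (lt_of_le_of_lt hρA hA1); linarith
    have hLAρ : -Real.log A ≤ -Real.log ρ := by
      have := Real.log_le_log hρ0 hρA; linarith
    set t : ℝ := Real.log ρ - Real.log r with ht
    have ht0 : 0 ≤ t := by
      have := Real.log_le_log hr hrρ; rw [ht]; linarith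
    have hLr : -Real.log r = -Real.log ρ + t := by rw [ht]; ring
    have hLrpos : 0 < -Real.log r := by rw [hLr]; linarith
    -- key: (-log r)^n ≤ (1+c/δ)^n * (ρ/r)^(α/2) * (-log ρ)^n
    have hexp : (ρ / r) ^ (α / 2) = Real.exp ((α / 2) * t) := by
      rw [Real.rpow_def_of_pos (by positivity), Real.log_div (ne_of_gt hρ0) (ne_of_gt hr), ht]
      ring_nf
    have key : (-Real.log r) ^ n ≤ (1 + c / δ) ^ n * ((ρ / r) ^ (α / 2) * (-Real.log ρ) ^ n) := by
      have h1 : -Real.log r ≤ (-Real.log ρ) * (1 + c * t) := by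
        rw [hLr]
        have : t ≤ (-Real.log ρ) * (c * t) := by
          have h2 : (-Real.log A) * c = 1 := mul_inv_cancel₀ (ne_of_gt hLA)
          nlinarith [mul_le_mul_of_nonneg_right hLAρ (mul_nonneg (by positivity : (0:ℝ) ≤ c) ht0)]
        linarith
      have h2 : 1 + c * t ≤ (1 + c / δ) * (1 + δ * t) := by
        have hct : (c / δ) * (δ * t) = c * t := by field_simp
        nlinarith [hct, mul_nonneg hδpos.le ht0,
          div_nonneg (show (0:ℝ) ≤ c by positivity) hδpos.le]
      have h3 : (1 + δ * t) ≤ Real.exp (δ * t) := by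
        have := Real.add_one_le_exp (δ * t); linarith
      have h4 : -Real.log r ≤ (-Real.log ρ) * ((1 + c / δ) * Real.exp (δ * t)) := by
        calc -Real.log r ≤ (-Real.log ρ) * (1 + c * t) := h1
          _ ≤ (-Real.log ρ) * ((1 + c / δ) * (1 + δ * t)) :=
              mul_le_mul_of_nonneg_left h2 hLρ.le
          _ ≤ (-Real.log ρ) * ((1 + c / δ) * Real.exp (δ * t)) :=
              mul_le_mul_of_nonneg_left
                (mul_le_mul_of_nonneg_left h3 (by positivity)) hLρ.le
      have hnδ : (n : ℝ) * (δ * t) = α / 2 * t := by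
        rw [hδ]; field_simp
      calc (-Real.log r) ^ n ≤ ((-Real.log ρ) * ((1 + c / δ) * Real.exp (δ * t))) ^ n :=
            pow_le_pow_left₀ hLrpos.le h4 n
        _ = (1 + c / δ) ^ n * (Real.exp (δ * t) ^ n * (-Real.log ρ) ^ n) := by
            rw [mul_pow, mul_pow]; ac_rfl
        _ = (1 + c / δ) ^ n * ((ρ / r) ^ (α / 2) * (-Real.log ρ) ^ n) := by
            rw [hexp, ← Real.exp_nat_mul, hnδ]
    -- convert rpow to pow
    have hpowρ : (-Real.log ρ) ^ (-(k : ℝ)) = ((-Real.log ρ) ^ n)⁻¹ := by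
      rw [← hnk, Real.rpow_neg hLρ.le, Real.rpow_natCast]
    have hpowr : (-Real.log r) ^ (-(k : ℝ)) = ((-Real.log r) ^ n)⁻¹ := by
      rw [← hnk, Real.rpow_neg hLrpos.le, Real.rpow_natCast]
    rw [hpowρ, hpowr]
    have ha : 0 < (-Real.log ρ) ^ n := by positivity
    have hb : 0 < (-Real.log r) ^ n := by positivity
    have h5 : (1:ℝ) / ((-Real.log ρ) ^ n)
        ≤ ((1 + c / δ) ^ n * (ρ / r) ^ (α / 2)) / ((-Real.log r) ^ n) := by
      rw [div_le_div_iff₀ ha hb]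
      calc 1 * (-Real.log r) ^ n = (-Real.log r) ^ n := one_mul _
        _ ≤ (1 + c / δ) ^ n * ((ρ / r) ^ (α / 2) * (-Real.log ρ) ^ n) := key
        _ = (1 + c / δ) ^ n * (ρ / r) ^ (α / 2) * (-Real.log ρ) ^ n := by ring
    calc ((-Real.log ρ) ^ n)⁻¹ = 1 / ((-Real.log ρ) ^ n) := (one_div _).symm
      _ ≤ ((1 + c / δ) ^ n * (ρ / r) ^ (α / 2)) / ((-Real.log r) ^ n) := h5
      _ = (1 + c / δ) ^ n * (((-Real.log r) ^ n)⁻¹ * (ρ / r) ^ (α / 2)) := by ring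

lemma my_integral_sq_cs {X : Type*} [MeasurableSpace X] {μ : Measure X} {φ ψ : X → ℝ}
    (hφ : MemLp φ 2 μ) (hψ : MemLp ψ 2 μ) :
    (∫ x, φ x * ψ x ∂μ) ^ 2 ≤ (∫ x, φ x ^ 2 ∂μ) * (∫ x, ψ x ^ 2 ∂μ) := by
  set Φ : Lp ℝ 2 μ := hφ.toLp φ
  set Ψ : Lp ℝ 2 μ := hψ.toLp ψ
  have hΦ : (Φ : X → ℝ) =ᵐ[μ] φ := hφ.coeFn_toLp
  have hΨ : (Ψ : X → ℝ) =ᵐ[μ] ψ := hψ.coeFn_toLp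
  have h1 : (inner ℝ Φ Ψ : ℝ) = ∫ x, φ x * ψ x ∂μ := by
    rw [MeasureTheory.L2.inner_def]
    refine integral_congr_ae ?_
    filter_upwards [hΦ, hΨ] with x h1 h2
    simp [h1, h2, real_inner_eq_re_inner]; ring
  have h2 : (inner ℝ Φ Φ : ℝ) = ∫ x, φ x ^ 2 ∂μ := by
    rw [MeasureTheory.L2.inner_def]
    refine integral_congr_ae ?_
    filter_upwards [hΦ] with x h1
    simp [h1, sq]
  have h3 : (inner ℝ Ψ Ψ : ℝ) = ∫ x, ψ x ^ 2 ∂μ := by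
    rw [MeasureTheory.L2.inner_def]
    refine integral_congr_ae ?_
    filter_upwards [hΨ] with x h1
    simp [h1, sq]
  have := real_inner_mul_inner_self_le Φ Ψ
  rw [h1, h2, h3] at this
  nlinarith [this]

lemma my_intD (A : ℝ) (hA0 : 0 < A) (hA1 : A < 1) :
    IntegrableOn (fun r : ℝ => r ^ (-1:ℝ) * (-Real.log r) ^ (-2:ℝ)) (Ioo 0 A) ∧
    ∫ r in Ioo (0:ℝ) A, r ^ (-1:ℝ) * (-Real.log r) ^ (-2:ℝ) = (-Real.log A)⁻¹ := by
  have hLA : 0 < -Real.log A := by have := Real.log_neg hA0 hA1; linarith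
  set LA := -Real.log A with hLAdef
  set f : ℝ → ℝ := fun t => Real.exp (-t) with hf
  set f' : ℝ → ℝ := fun t => -Real.exp (-t) with hf'
  have hderiv : ∀ t ∈ Ioi LA, HasDerivWithinAt f (f' t) (Ioi LA) t := by
    intro t _
    exact ((Real.hasDerivAt_exp (-t)).comp t ((hasDerivAt_id t).neg)).hasDerivWithinAt.congr_deriv
      (by simp [hf'])
  have hinj : InjOn f (Ioi LA) := fun a _ b _ h => by
    have := Real.exp_injective h; linarith [this]
  have himg : f '' (Ioi LA) = Ioo 0 A := by
    ext x
    constructor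
    · rintro ⟨t, ht, rfl⟩
      refine ⟨Real.exp_pos _, ?_⟩
      have : -t < Real.log A := by simp only [mem_Ioi, hLAdef] at ht ⊢; linarith
      calc Real.exp (-t) < Real.exp (Real.log A) := Real.exp_lt_exp.2 this
        _ = A := Real.exp_log hA0
    · rintro ⟨hx0, hxA⟩
      refine ⟨-Real.log x, ?_, ?_⟩
      · simp only [mem_Ioi, hLAdef]
        have := Real.log_lt_log hx0 hxA; linarith
      · simp [hf, Real.exp_log hx0]
    -- value of g ∘ f
  set g : ℝ → ℝ := fun r => r ^ (-1:ℝ) * (-Real.log r) ^ (-2:ℝ) with hg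
  have hcomp : ∀ t ∈ Ioi LA, |f' t| • g (f t) = t ^ (-2:ℝ) := by
    intro t ht
    have ht0 : 0 < t := lt_trans hLA ht
    have h1 : |f' t| = Real.exp (-t) := by
      simp [hf', abs_of_nonpos (neg_nonpos_of_nonneg (Real.exp_pos _).le)]
    have h2 : g (f t) = Real.exp t * t ^ (-2:ℝ) := by
      simp only [hg, hf]
      rw [Real.log_exp, neg_neg, Real.rpow_neg_one, Real.exp_neg, inv_inv]
    rw [smul_eq_mul, h1, h2, ← mul_assoc, ← Real.exp_add]
    simp
  have hint2 : IntegrableOn (fun t : ℝ => t ^ (-2:ℝ)) (Ioi LA) :=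
    integrableOn_Ioi_rpow_of_lt (by norm_num) hLA
  have hintc : IntegrableOn (fun t => |f' t| • g (f t)) (Ioi LA) :=
    hint2.congr_fun (fun t ht => (hcomp t ht).symm) measurableSet_Ioi
  constructor
  · rw [← himg]
    rw [integrableOn_image_iff_integrableOn_abs_deriv_smul measurableSet_Ioi hderiv hinj]
    exact hintc
  · rw [← himg, integral_image_eq_integral_abs_deriv_smul measurableSet_Ioi hderiv hinj]
    rw [setIntegral_congr_fun measurableSet_Ioi hcomp]
    rw [integral_Ioi_rpow_of_lt (by norm_num) hLA]
    norm_num [Real.rpow_neg_one]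

-- continuity helper
lemma my_contV (c d : ℝ) {a b : ℝ} (ha : 0 < a) (hb : b < 1) :
    ContinuousOn (fun ρ : ℝ => ρ ^ c * (-Real.log ρ) ^ d) (Icc a b) := by
  apply ContinuousOn.mul
  · exact fun x hx => (Real.continuousAt_rpow_const x c
      (Or.inl (ne_of_gt (lt_of_lt_of_le ha hx.1)))).continuousWithinAt
  · intro x hx
    have hx0 : 0 < x := lt_of_lt_of_le ha hx.1
    have hlx : Real.log x < 0 := Real.log_neg hx0 (lt_of_le_of_lt hx.2 hb)
    apply ContinuousWithinAt.rpow_const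
    · exact ((Real.continuousAt_log (ne_of_gt hx0)).continuousWithinAt).neg
    · left; simp only [ne_eq, neg_eq_zero]; linarith

lemma my_intV (α : ℝ) (hα0 : 0 < α) (k : ℤ) (A : ℝ) (hA0 : 0 < A) (hA1 : A < 1) :
    ∃ C₂ : ℝ, 0 < C₂ ∧ ∀ r ∈ Ioo (0:ℝ) A,
      IntegrableOn (fun ρ : ℝ => ρ ^ (-(1+α)) * (-Real.log ρ) ^ (-(k:ℝ))) (Ioo r A) ∧
      ∫ ρ in Ioo r A, ρ ^ (-(1+α)) * (-Real.log ρ) ^ (-(k:ℝ))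
        ≤ C₂ * (r ^ (-α) * (-Real.log r) ^ (-(k:ℝ))) := by
  obtain ⟨C₁, hC₁, hcmp⟩ := my_logcmp α hα0 k A hA0 hA1
  refine ⟨C₁ * (2 / α), by positivity, fun r hr => ?_⟩
  obtain ⟨hr0, hrA⟩ := hr
  have hLr : 0 < -Real.log r := by
    have := Real.log_neg hr0 (lt_trans hrA hA1); linarith
  have hVint : IntegrableOn (fun ρ : ℝ => ρ ^ (-(1+α)) * (-Real.log ρ) ^ (-(k:ℝ))) (Ioo r A) :=
    ((my_contV (-(1+α)) (-(k:ℝ)) hr0 hA1).integrableOn_Icc).mono_set Ioo_subset_Icc_self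
  refine ⟨hVint, ?_⟩
  -- dominating function
  set c : ℝ := C₁ * ((-Real.log r) ^ (-(k:ℝ)) * r ^ (-(α/2))) with hc
  have hgint : IntegrableOn (fun ρ : ℝ => c * ρ ^ (-(1+α/2))) (Ioo r A) := by
    apply Integrable.const_mul
    exact ((my_contV (-(1+α/2)) 0 hr0 hA1).congr (fun x hx => by
      simp [Real.rpow_zero])).integrableOn_Icc.mono_set Ioo_subset_Icc_self
  have hbound : ∀ ρ ∈ Ioo r A,
      ρ ^ (-(1+α)) * (-Real.log ρ) ^ (-(k:ℝ)) ≤ c * ρ ^ (-(1+α/2)) := by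
    intro ρ hρ
    obtain ⟨hrρ, hρA⟩ := hρ
    have hρ0 : 0 < ρ := lt_trans hr0 hrρ
    have h1 := hcmp r ρ hr0 hrρ.le hρA.le
    have h2 : (ρ / r) ^ (α/2) = ρ ^ (α/2) * r ^ (-(α/2)) := by
      rw [Real.div_rpow hρ0.le hr0.le, Real.rpow_neg hr0.le, div_eq_mul_inv]
    have h3 : ρ ^ (-(1+α)) * ρ ^ (α/2) = ρ ^ (-(1+α/2)) := by
      rw [← Real.rpow_add hρ0]; ring_nf
    have h4 : 0 ≤ ρ ^ (-(1+α)) := Real.rpow_nonneg hρ0.le _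
    calc ρ ^ (-(1+α)) * (-Real.log ρ) ^ (-(k:ℝ))
        ≤ ρ ^ (-(1+α)) * (C₁ * ((-Real.log r) ^ (-(k:ℝ)) * (ρ / r) ^ (α/2))) :=
          mul_le_mul_of_nonneg_left h1 h4
      _ = c * (ρ ^ (-(1+α)) * ρ ^ (α/2)) := by rw [h2, hc]; ring
      _ = c * ρ ^ (-(1+α/2)) := by rw [h3]
  have hmono := setIntegral_mono_on hVint hgint measurableSet_Ioo hbound
  refine le_trans hmono ?_
  -- compute the integral of the dominating function
  rw [integral_const_mul]
  have hIoc : ∫ ρ in Ioo r A, ρ ^ (-(1+α/2)) = ∫ ρ in Ioc r A, ρ ^ (-(1+α/2)) := by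
    rw [← integral_Ioc_eq_integral_Ioo]
  have hval : ∫ ρ in Ioc r A, ρ ^ (-(1+α/2))
      = (A ^ (-(α/2)) - r ^ (-(α/2))) / (-(α/2)) := by
    rw [← intervalIntegral.integral_of_le hrA.le]
    rw [integral_rpow (Or.inr ⟨ne_of_lt (by linarith : -(1+α/2) < -1),
      fun h => by rw [Set.uIcc_of_le hrA.le, Set.mem_Icc] at h; linarith [h.1]⟩)]
    norm_num
  rw [hIoc, hval]
  have hApos : 0 < A ^ (-(α/2)) := Real.rpow_pos_of_pos hA0 _
  have hrme : (A ^ (-(α/2)) - r ^ (-(α/2))) / (-(α/2)) ≤ (2/α) * r ^ (-(α/2)) := by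
    rw [div_le_iff_of_neg (by linarith : -(α/2) < 0)]
    have : (2/α) * r ^ (-(α/2)) * -(α/2) = - r ^ (-(α/2)) := by field_simp
    rw [this]
    linarith
  calc c * ((A ^ (-(α/2)) - r ^ (-(α/2))) / (-(α/2)))
      ≤ c * ((2/α) * r ^ (-(α/2))) := by
        apply mul_le_mul_of_nonneg_left hrme
        rw [hc]; positivity
    _ = (C₁ * (2/α)) * (r ^ (-(α/2)) * r ^ (-(α/2)) * (-Real.log r) ^ (-(k:ℝ))) := by
        rw [hc]; ring
    _ = (C₁ * (2/α)) * (r ^ (-α) * (-Real.log r) ^ (-(k:ℝ))) := by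
        rw [← Real.rpow_add hr0]; ring_nf

lemma my_sq_rpow (x : ℝ) (hx : 0 ≤ x) (c : ℝ) : (x ^ c) ^ 2 = x ^ (c * 2) := by
  rw [Real.rpow_mul hx, Real.rpow_two]

lemma my_key (α : ℝ) (hα0 : 0 < α) (k : ℤ) (A : ℝ) (hA0 : 0 < A) (hA1 : A < 1)
    (f : ℝ → ℂ) (hfm : Measurable f)
    (hfF : IntegrableOn (fun ρ : ℝ => ‖f ρ‖ ^ 2 * (-Real.log ρ) ^ k * ρ ^ (1 + α)) (Ioo 0 A))
    (r : ℝ) (hr : r ∈ Ioo 0 A)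
    (hVint : IntegrableOn (fun ρ : ℝ => ρ ^ (-(1+α)) * (-Real.log ρ) ^ (-(k:ℝ))) (Ioo r A)) :
    IntegrableOn f (Ioo r A) ∧
    ‖∫ ρ in Ioo r A, f ρ‖ ^ 2 ≤
      (∫ ρ in Ioo 0 A, ‖f ρ‖ ^ 2 * (-Real.log ρ) ^ k * ρ ^ (1 + α)) *
      (∫ ρ in Ioo r A, ρ ^ (-(1+α)) * (-Real.log ρ) ^ (-(k:ℝ))) := by
  obtain ⟨hr0, hrA⟩ := hr
  set S : Set ℝ := Ioo r A with hS
  set F : ℝ → ℝ := fun ρ => ‖f ρ‖ ^ 2 * (-Real.log ρ) ^ k * ρ ^ (1 + α) with hF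
  set V : ℝ → ℝ := fun ρ => ρ ^ (-(1+α)) * (-Real.log ρ) ^ (-(k:ℝ)) with hV
  set W : ℝ → ℝ := fun ρ => ρ ^ ((1+α)/2) * (-Real.log ρ) ^ ((k:ℝ)/2) with hW
  set ψ : ℝ → ℝ := fun ρ => ρ ^ (-((1+α)/2)) * (-Real.log ρ) ^ (-((k:ℝ)/2)) with hψdef
  set φ : ℝ → ℝ := fun ρ => ‖f ρ‖ * W ρ with hφdef
  have hSsub : S ⊆ Ioo 0 A := Ioo_subset_Ioo hr0.le le_rfl
  have hmem : ∀ ρ ∈ S, 0 < ρ ∧ 0 < -Real.log ρ := by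
    intro ρ hρ
    have hρ0 : 0 < ρ := lt_trans hr0 hρ.1
    have := Real.log_neg hρ0 (lt_trans hρ.2 hA1)
    exact ⟨hρ0, by linarith⟩
  -- pointwise identities on S
  have eq1 : ∀ ρ ∈ S, φ ρ ^ 2 = F ρ := by
    intro ρ hρ
    obtain ⟨hρ0, hLρ⟩ := hmem ρ hρ
    simp only [hφdef, hW, hF]
    rw [mul_pow, mul_pow, my_sq_rpow _ hρ0.le, my_sq_rpow _ hLρ.le]
    rw [show (1+α)/2*2 = 1+α by ring, show (k:ℝ)/2*2 = (k:ℝ) by ring,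
      Real.rpow_intCast]
    ring
  have eq2 : ∀ ρ ∈ S, ψ ρ ^ 2 = V ρ := by
    intro ρ hρ
    obtain ⟨hρ0, hLρ⟩ := hmem ρ hρ
    simp only [hψdef, hV]
    rw [mul_pow, my_sq_rpow _ hρ0.le, my_sq_rpow _ hLρ.le]
    rw [show -((1+α)/2)*2 = -(1+α) by ring, show -((k:ℝ)/2)*2 = -(k:ℝ) by ring]
  have eq3 : ∀ ρ ∈ S, W ρ * ψ ρ = 1 := by
    intro ρ hρ
    obtain ⟨hρ0, hLρ⟩ := hmem ρ hρ
    simp only [hW, hψdef]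
    rw [show ρ ^ ((1+α)/2) * (-Real.log ρ) ^ ((k:ℝ)/2) *
        (ρ ^ (-((1+α)/2)) * (-Real.log ρ) ^ (-((k:ℝ)/2)))
      = (ρ ^ ((1+α)/2) * ρ ^ (-((1+α)/2))) *
        ((-Real.log ρ) ^ ((k:ℝ)/2) * (-Real.log ρ) ^ (-((k:ℝ)/2))) from by ring]
    rw [← Real.rpow_add hρ0, ← Real.rpow_add hLρ]
    simp
  -- measurability
  have hWsm : AEStronglyMeasurable W (volume.restrict S) :=
    ((my_contV ((1+α)/2) ((k:ℝ)/2) hr0 hA1).mono Ioo_subset_Icc_self).aestronglyMeasurable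
      measurableSet_Ioo
  have hψsm : AEStronglyMeasurable ψ (volume.restrict S) :=
    ((my_contV (-((1+α)/2)) (-((k:ℝ)/2)) hr0 hA1).mono Ioo_subset_Icc_self).aestronglyMeasurable
      measurableSet_Ioo
  have hφsm : AEStronglyMeasurable φ (volume.restrict S) :=
    (hfm.norm.aestronglyMeasurable).mul hWsm
  -- integrability of F on S
  have hFS : IntegrableOn F S := hfF.mono_set hSsub
  -- Memℒp facts
  have hφ2 : MemLp φ 2 (volume.restrict S) := by
    rw [memLp_two_iff_integrable_sq hφsm]
    exact hFS.congr ((ae_restrict_iff' measurableSet_Ioo).2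
      (Filter.Eventually.of_forall fun ρ hρ => (eq1 ρ hρ).symm))
  have hψ2 : MemLp ψ 2 (volume.restrict S) := by
    rw [memLp_two_iff_integrable_sq hψsm]
    exact hVint.congr ((ae_restrict_iff' measurableSet_Ioo).2
      (Filter.Eventually.of_forall fun ρ hρ => (eq2 ρ hρ).symm))
  -- integrability of f on S
  have hf1 : MemLp (fun ρ => W ρ • f ρ) 2 (volume.restrict S) := by
    refine (memLp_two_iff_integrable_sq_norm (hWsm.smul hfm.aestronglyMeasurable)).2 ?_
    refine hFS.congr ((ae_restrict_iff' measurableSet_Ioo).2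
      (Filter.Eventually.of_forall fun ρ hρ => ?_))
    show F ρ = ‖W ρ • f ρ‖ ^ 2
    rw [norm_smul, Real.norm_eq_abs, mul_pow, sq_abs]
    rw [← eq1 ρ hρ]
    simp only [hφdef]
    ring
  have hsmul : MemLp (ψ • fun ρ => W ρ • f ρ) 1 (volume.restrict S) :=
    hf1.smul hψ2 (hpqr := ⟨by norm_num [ENNReal.inv_two_add_inv_two]⟩)
  have hfS : IntegrableOn f S := by
    have hint : Integrable (ψ • fun ρ => W ρ • f ρ) (volume.restrict S) :=
      memLp_one_iff_integrable.1 hsmul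
    refine hint.congr ((ae_restrict_iff' measurableSet_Ioo).2
      (Filter.Eventually.of_forall fun ρ hρ => ?_))
    simp only [Pi.smul_apply', smul_smul]
    rw [mul_comm, eq3 ρ hρ, one_smul]
  refine ⟨hfS, ?_⟩
  -- Cauchy–Schwarz chain
  have hn1 : ‖∫ ρ in S, f ρ‖ ≤ ∫ ρ in S, ‖f ρ‖ := norm_integral_le_integral_norm _
  have hn2 : ∫ ρ in S, ‖f ρ‖ = ∫ ρ in S, φ ρ * ψ ρ := by
    refine setIntegral_congr_fun measurableSet_Ioo (fun ρ hρ => ?_)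
    simp only [hφdef]
    rw [mul_assoc, eq3 ρ hρ, mul_one]
  have hCS := my_integral_sq_cs hφ2 hψ2
  have hφint : ∫ ρ in S, φ ρ ^ 2 = ∫ ρ in S, F ρ :=
    setIntegral_congr_fun measurableSet_Ioo (fun ρ hρ => eq1 ρ hρ)
  have hψint : ∫ ρ in S, ψ ρ ^ 2 = ∫ ρ in S, V ρ :=
    setIntegral_congr_fun measurableSet_Ioo (fun ρ hρ => eq2 ρ hρ)
  have hFmono : ∫ ρ in S, F ρ ≤ ∫ ρ in Ioo 0 A, F ρ := by
    refine setIntegral_mono_set hfF ?_ (HasSubset.Subset.eventuallyLE hSsub)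
    refine (ae_restrict_iff' measurableSet_Ioo).2
      (Filter.Eventually.of_forall fun ρ hρ => ?_)
    have hρ0 : 0 < ρ := hρ.1
    have hLρ : 0 < -Real.log ρ := by
      have := Real.log_neg hρ0 (lt_trans hρ.2 hA1); linarith
    simp only [hF]
    have : (0:ℝ) < (-Real.log ρ) ^ k := zpow_pos hLρ _
    positivity
  have hVnonneg : 0 ≤ ∫ ρ in S, V ρ := by
    refine setIntegral_nonneg measurableSet_Ioo (fun ρ hρ => ?_)
    obtain ⟨hρ0, hLρ⟩ := hmem ρ hρ
    simp only [hV]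
    positivity
  have hub : ∫ ρ in S, ‖f ρ‖ = ∫ ρ in S, φ ρ * ψ ρ := hn2
  have hnorm_nonneg : (0:ℝ) ≤ ‖∫ ρ in S, f ρ‖ := norm_nonneg _
  calc ‖∫ ρ in S, f ρ‖ ^ 2 ≤ (∫ ρ in S, φ ρ * ψ ρ) ^ 2 := by
        rw [← hn2]
        exact pow_le_pow_left₀ hnorm_nonneg hn1 2
    _ ≤ (∫ ρ in S, φ ρ ^ 2) * (∫ ρ in S, ψ ρ ^ 2) := hCS
    _ = (∫ ρ in S, F ρ) * (∫ ρ in S, V ρ) := by rw [hφint, hψint]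
    _ ≤ (∫ ρ in Ioo 0 A, F ρ) * (∫ ρ in S, V ρ) :=
        mul_le_mul_of_nonneg_right hFmono hVnonneg

/-- Weighted Hardy-type inequality, case `n = 0`, from the proof of Lemma 3. -/
theorem stmt_1 (α : ℝ) (hα0 : 0 < α) (hα1 : α < 1)
    (k : ℤ) (A : ℝ) (hA0 : 0 < A) (hA1 : A < 1) :
    ∃ C : ℝ, 0 < C ∧ ∀ f : ℝ → ℂ, Measurable f →
      IntegrableOn (fun ρ : ℝ => ‖f ρ‖ ^ 2 * (-Real.log ρ) ^ k * ρ ^ (1 + α)) (Ioo 0 A) →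
      ((∀ r ∈ Ioo (0 : ℝ) A, IntegrableOn f (Ioo r A)) ∧
        ∫ r in Ioo (0 : ℝ) A,
            ‖(-2 : ℝ) • ∫ ρ in Ioo r A, f ρ‖ ^ 2
              * (-Real.log r) ^ (k - 2) * r ^ (-1 + α)
          ≤ C * ∫ ρ in Ioo (0 : ℝ) A, ‖f ρ‖ ^ 2 * (-Real.log ρ) ^ k * ρ ^ (1 + α)) := by
  obtain ⟨C₂, hC₂, hB⟩ := my_intV α hα0 k A hA0 hA1
  have hLA : 0 < -Real.log A := by have := Real.log_neg hA0 hA1; linarith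
  refine ⟨4 * C₂ * (-Real.log A)⁻¹, by positivity, fun f hfm hfF => ?_⟩
  set I : ℝ := ∫ ρ in Ioo (0:ℝ) A, ‖f ρ‖ ^ 2 * (-Real.log ρ) ^ k * ρ ^ (1 + α) with hI
  have hI0 : 0 ≤ I := by
    refine setIntegral_nonneg measurableSet_Ioo (fun ρ hρ => ?_)
    have hρ0 : 0 < ρ := hρ.1
    have hLρ : 0 < -Real.log ρ := by
      have := Real.log_neg hρ0 (lt_trans hρ.2 hA1); linarith
    have : (0:ℝ) < (-Real.log ρ) ^ k := zpow_pos hLρ _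
    positivity
  refine ⟨fun r hr => (my_key α hα0 k A hA0 hA1 f hfm hfF r hr (hB r hr).1).1, ?_⟩
  -- pointwise bound and integration
  obtain ⟨hDint, hDval⟩ := my_intD A hA0 hA1
  have hmain : ∫ r in Ioo (0:ℝ) A,
      ‖(-2 : ℝ) • ∫ ρ in Ioo r A, f ρ‖ ^ 2 * (-Real.log r) ^ (k - 2) * r ^ (-1 + α)
      ≤ ∫ r in Ioo (0:ℝ) A, (4 * C₂ * I) * (r ^ (-1:ℝ) * (-Real.log r) ^ (-2:ℝ)) := by
    refine integral_mono_of_nonneg ?_ (hDint.const_mul _) ?_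
    · refine (ae_restrict_iff' measurableSet_Ioo).2
        (Filter.Eventually.of_forall fun r hr => ?_)
      have hr0 : 0 < r := hr.1
      have hLr : 0 < -Real.log r := by
        have := Real.log_neg hr0 (lt_trans hr.2 hA1); linarith
      have h1 : (0:ℝ) < (-Real.log r) ^ (k - 2) := zpow_pos hLr _
      positivity
    · refine (ae_restrict_iff' measurableSet_Ioo).2
        (Filter.Eventually.of_forall fun r hr => ?_)
      have hr0 : 0 < r := hr.1
      have hLr : 0 < -Real.log r := by
        have := Real.log_neg hr0 (lt_trans hr.2 hA1); linarith
      obtain ⟨hBint, hBval⟩ := hB r hr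
      have hkey := (my_key α hα0 k A hA0 hA1 f hfm hfF r hr hBint).2
      set u : ℂ := ∫ ρ in Ioo r A, f ρ with hu
      have hkey2 : ‖u‖ ^ 2 ≤ I * (C₂ * (r ^ (-α) * (-Real.log r) ^ (-(k:ℝ)))) :=
        le_trans hkey (mul_le_mul_of_nonneg_left hBval hI0)
      have hsm : ‖(-2 : ℝ) • u‖ ^ 2 = 4 * ‖u‖ ^ 2 := by
        rw [norm_smul]
        simp [norm_neg]
        ring
      have e1 : (-Real.log r) ^ (k - 2) = (-Real.log r) ^ ((k:ℝ) - 2) := by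
        rw [← Real.rpow_intCast (-Real.log r) (k-2)]
        norm_num
      have e2 : r ^ (-α) * r ^ (-1 + α) = r ^ (-1:ℝ) := by
        rw [← Real.rpow_add hr0]; ring_nf
      have e3 : (-Real.log r) ^ (-(k:ℝ)) * (-Real.log r) ^ ((k:ℝ) - 2)
          = (-Real.log r) ^ (-2:ℝ) := by
        rw [← Real.rpow_add hLr]; ring_nf
      have w1 : (0:ℝ) ≤ (-Real.log r) ^ ((k:ℝ) - 2) := Real.rpow_nonneg hLr.le _
      have w2 : (0:ℝ) ≤ r ^ (-1 + α) := Real.rpow_nonneg hr0.le _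
      calc ‖(-2 : ℝ) • u‖ ^ 2 * (-Real.log r) ^ (k - 2) * r ^ (-1 + α)
          = 4 * ‖u‖ ^ 2 * (-Real.log r) ^ ((k:ℝ) - 2) * r ^ (-1 + α) := by
            rw [hsm, e1]
        _ ≤ 4 * (I * (C₂ * (r ^ (-α) * (-Real.log r) ^ (-(k:ℝ)))))
              * (-Real.log r) ^ ((k:ℝ) - 2) * r ^ (-1 + α) := by
            apply mul_le_mul_of_nonneg_right _ w2
            apply mul_le_mul_of_nonneg_right _ w1
            linarith
        _ = (4 * C₂ * I) * ((r ^ (-α) * r ^ (-1 + α))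
              * ((-Real.log r) ^ (-(k:ℝ)) * (-Real.log r) ^ ((k:ℝ) - 2))) := by ring
        _ = (4 * C₂ * I) * (r ^ (-1:ℝ) * (-Real.log r) ^ (-2:ℝ)) := by
            rw [e2, e3]
  refine le_trans hmain ?_
  rw [integral_const_mul, hDval]
  have : 4 * C₂ * I * (-Real.log A)⁻¹ = 4 * C₂ * (-Real.log A)⁻¹ * I := by ring
  linarith [this.le]
end

section
/- Let n be a positive integer, let 0<α<1, k∈ℤ, and 0<A<1. Then there exists a constant C>0 such that for every measurable function f:(0,A)→ℂ with ∫₀^A |f(ρ)|² |log ρ|^k ρ^{1+α} dρ < ∞, the function u(r) := -2 r^n ∫_r^A ρ^{-n} f(ρ) dρ is well defined for every r∈(0,A) and satisfies ∫₀^A |u(r)|² |log r|^{k-2} r^{-1+α} dr ≤ C ∫₀^A |f(ρ)|² |log ρ|^k ρ^{1+α} dρ. -/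
open MeasureTheory Set Real


noncomputable def gg (β : ℝ) (k : ℤ) (ρ : ℝ) : ℝ := ρ ^ (-β - 1) * (-Real.log ρ) ^ (-k)
noncomputable def hh (β : ℝ) (k : ℤ) (ρ : ℝ) : ℝ := ρ ^ (-β) * (-Real.log ρ) ^ (-k)
noncomputable def HH (β : ℝ) (k : ℤ) (ρ : ℝ) : ℝ :=
  ρ ^ (-β - 1) * (-Real.log ρ) ^ (-k - 1) * (k - β * (-Real.log ρ))

lemma neglog_pos {x : ℝ} (h0 : 0 < x) (h1 : x < 1) : 0 < -Real.log x :=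
  neg_pos.2 (Real.log_neg h0 h1)

lemma contOn_aux (a : ℝ) (m : ℤ) {s : Set ℝ} (hs : ∀ x ∈ s, 0 < x ∧ x < 1) :
    ContinuousOn (fun ρ : ℝ => ρ ^ a * (-Real.log ρ) ^ m) s := by
  apply ContinuousOn.mul
  · exact ContinuousOn.rpow_const continuousOn_id fun x hx => Or.inl (hs x hx).1.ne'
  · apply ContinuousOn.zpow₀
    · exact (Real.continuousOn_log.mono fun x hx => (hs x hx).1.ne').neg
    · exact fun x hx => Or.inl (neglog_pos (hs x hx).1 (hs x hx).2).ne'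

lemma contOn_gg (β : ℝ) (k : ℤ) {s : Set ℝ} (hs : ∀ x ∈ s, 0 < x ∧ x < 1) :
    ContinuousOn (gg β k) s := contOn_aux _ _ hs

lemma contOn_hh (β : ℝ) (k : ℤ) {s : Set ℝ} (hs : ∀ x ∈ s, 0 < x ∧ x < 1) :
    ContinuousOn (hh β k) s := contOn_aux _ _ hs

lemma contOn_HH (β : ℝ) (k : ℤ) {s : Set ℝ} (hs : ∀ x ∈ s, 0 < x ∧ x < 1) :
    ContinuousOn (HH β k) s := by
  apply (contOn_aux (-β - 1) (-k - 1) hs).mul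
  apply ContinuousOn.sub continuousOn_const
  exact ContinuousOn.mul continuousOn_const
    (Real.continuousOn_log.mono fun x hx => (hs x hx).1.ne').neg

lemma hasDerivAt_hh (β : ℝ) (k : ℤ) {ρ : ℝ} (h0 : 0 < ρ) (h1 : ρ < 1) :
    HasDerivAt (hh β k) (HH β k ρ) ρ := by
  have hL : 0 < -Real.log ρ := neglog_pos h0 h1
  have d1 : HasDerivAt (fun x : ℝ => x ^ (-β)) (-β * ρ ^ (-β - 1)) ρ :=
    Real.hasDerivAt_rpow_const (Or.inl h0.ne')
  have dlog : HasDerivAt (fun x : ℝ => -Real.log x) (-ρ⁻¹) ρ := (Real.hasDerivAt_log h0.ne').neg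
  have d2 : HasDerivAt (fun x : ℝ => (-Real.log x) ^ (-k))
      ((((-k : ℤ) : ℝ) * (-Real.log ρ) ^ (-k - 1)) * -ρ⁻¹) ρ := by
    simpa [Function.comp_def] using
      (hasDerivAt_zpow (-k) (-Real.log ρ) (Or.inl hL.ne')).comp ρ dlog
  have := d1.mul d2
  refine this.congr_deriv (Eq.symm ?_)
  unfold HH
  have e1 : (-Real.log ρ) ^ (-k) = (-Real.log ρ) ^ (-k - 1) * (-Real.log ρ) := by
    rw [← zpow_add_one₀ hL.ne']; norm_num
  have e2 : ρ ^ (-β) = ρ ^ (-β - 1) * ρ := by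
    rw [← Real.rpow_add_one h0.ne']; norm_num
  rw [e1, e2]
  push_cast
  field_simp
  ring

lemma gg_pos {β : ℝ} {k : ℤ} {x : ℝ} (h0 : 0 < x) (h1 : x < 1) : 0 < gg β k x :=
  mul_pos (Real.rpow_pos_of_pos h0 _) (zpow_pos (neglog_pos h0 h1) _)

lemma hh_pos {β : ℝ} {k : ℤ} {x : ℝ} (h0 : 0 < x) (h1 : x < 1) : 0 < hh β k x :=
  mul_pos (Real.rpow_pos_of_pos h0 _) (zpow_pos (neglog_pos h0 h1) _)

lemma key_bound (β : ℝ) (hβ : 0 < β) (k : ℤ) (A : ℝ) (hA0 : 0 < A) (hA1 : A < 1) :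
    ∃ C₂ : ℝ, 0 < C₂ ∧ ∀ r ∈ Ioo (0:ℝ) A,
      ∫ ρ in Ioo r A, gg β k ρ ≤ C₂ * hh β k r := by
  set T : ℝ := (2 * |(k : ℝ)| + 2) / β with hTdef
  have hT : 0 < T := by positivity
  set B : ℝ := min A (Real.exp (-T)) with hBdef
  have hB0 : 0 < B := lt_min hA0 (Real.exp_pos _)
  have hBA : B ≤ A := min_le_left _ _
  have hB1 : B < 1 := lt_of_le_of_lt hBA hA1
  -- for ρ ≤ B, T ≤ -log ρ
  have hlogB : ∀ ρ : ℝ, 0 < ρ → ρ ≤ B → T ≤ -Real.log ρ := by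
    intro ρ hρ hρB
    have h1 : Real.log ρ ≤ Real.log B := Real.log_le_log hρ hρB
    have h2 : Real.log B ≤ Real.log (Real.exp (-T)) :=
      Real.log_le_log hB0 (min_le_right _ _)
    rw [Real.log_exp] at h2
    linarith
  -- derivative bound
  have hderiv_le : ∀ ρ : ℝ, 0 < ρ → ρ ≤ B → HH β k ρ ≤ -(β/2) * gg β k ρ := by
    intro ρ hρ hρB
    have hρ1 : ρ < 1 := lt_of_le_of_lt hρB hB1
    have hL : 0 < -Real.log ρ := neglog_pos hρ hρ1
    have hLT : T ≤ -Real.log ρ := hlogB ρ hρ hρB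
    have hX : 0 < ρ ^ (-β - 1) * (-Real.log ρ) ^ (-k - 1) :=
      mul_pos (Real.rpow_pos_of_pos hρ _) (zpow_pos hL _)
    have hk2 : (k : ℝ) ≤ β / 2 * (-Real.log ρ) := by
      have h1 : β / 2 * T = |(k:ℝ)| + 1 := by
        rw [hTdef]; field_simp
      have h2 : β / 2 * T ≤ β / 2 * (-Real.log ρ) :=
        mul_le_mul_of_nonneg_left hLT (by positivity)
      have h3 : (k : ℝ) ≤ |(k:ℝ)| := le_abs_self _
      linarith
    have e1 : (-Real.log ρ) ^ (-k) = (-Real.log ρ) ^ (-k - 1) * (-Real.log ρ) := by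
      rw [← zpow_add_one₀ hL.ne']; norm_num
    unfold HH gg
    rw [e1]
    nlinarith [mul_le_mul_of_nonneg_left hk2 hX.le]
  -- interval integrability
  have hicc : ∀ a b : ℝ, 0 < a → b < 1 → ∀ x ∈ Icc a b, 0 < x ∧ x < 1 :=
    fun a b ha hb x hx => ⟨lt_of_lt_of_le ha hx.1, lt_of_le_of_lt hx.2 hb⟩
  have hint : ∀ a b : ℝ, 0 < a → a ≤ b → b < 1 → IntervalIntegrable (gg β k) volume a b :=
    fun a b ha hab hb => (contOn_gg β k (hicc a b ha hb)).intervalIntegrable_of_Icc hab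
  have hintH : ∀ a b : ℝ, 0 < a → a ≤ b → b < 1 → IntervalIntegrable (HH β k) volume a b :=
    fun a b ha hab hb => (contOn_HH β k (hicc a b ha hb)).intervalIntegrable_of_Icc hab
  -- FTC
  have hFTC : ∀ r : ℝ, 0 < r → r ≤ B → ∫ ρ in r..B, HH β k ρ = hh β k B - hh β k r := by
    intro r hr hrB
    apply intervalIntegral.integral_eq_sub_of_hasDerivAt _ (hintH r B hr hrB hB1)
    intro x hx
    rw [uIcc_of_le hrB] at hx
    exact hasDerivAt_hh β k (lt_of_lt_of_le hr hx.1) (lt_of_le_of_lt hx.2 hB1)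
  -- ∫ r..B gg ≤ (2/β) * hh r
  have hmain : ∀ r : ℝ, 0 < r → r ≤ B → ∫ ρ in r..B, gg β k ρ ≤ 2 / β * hh β k r := by
    intro r hr hrB
    have hb2 : (0:ℝ) ≤ 2 / β := by positivity
    have hle : ∀ x ∈ Icc r B, gg β k x ≤ -(2/β) * HH β k x := by
      intro x hx
      have h1 := hderiv_le x (lt_of_lt_of_le hr hx.1) hx.2
      have h2 := mul_le_mul_of_nonneg_left h1 hb2
      have he : 2 / β * (-(β/2) * gg β k x) = -gg β k x := by
        field_simp
      nlinarith
    have h3 := intervalIntegral.integral_mono_on hrB (hint r B hr hrB hB1)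
      ((hintH r B hr hrB hB1).const_mul _) hle
    rw [intervalIntegral.integral_const_mul, hFTC r hr hrB] at h3
    have hhB : 0 ≤ hh β k B := (mul_pos (Real.rpow_pos_of_pos hB0 _)
      (zpow_pos (neglog_pos hB0 hB1) _)).le
    calc ∫ ρ in r..B, gg β k ρ ≤ -(2/β) * (hh β k B - hh β k r) := h3
      _ ≤ 2 / β * hh β k r := by nlinarith
  -- monotonicity of hh below B
  have hh_mono : ∀ r : ℝ, 0 < r → r ≤ B → hh β k B ≤ hh β k r := by
    intro r hr hrB
    have h1 : ∫ ρ in r..B, HH β k ρ ≤ ∫ ρ in r..B, (0:ℝ) := by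
      apply intervalIntegral.integral_mono_on hrB (hintH r B hr hrB hB1)
        intervalIntegrable_const
      intro x hx
      have hx0 : 0 < x := lt_of_lt_of_le hr hx.1
      have hx1 : x < 1 := lt_of_le_of_lt hx.2 hB1
      have := hderiv_le x hx0 hx.2
      nlinarith [gg_pos (β := β) (k := k) hx0 hx1]
    rw [intervalIntegral.integral_zero, hFTC r hr hrB] at h1
    linarith
  -- minimum of hh on Icc B A
  obtain ⟨x₀, hx₀, hmin⟩ := isCompact_Icc.exists_isMinOn (⟨B, le_refl B, hBA⟩ : (Icc B A).Nonempty)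
    (contOn_hh β k (fun x hx => ⟨lt_of_lt_of_le hB0 hx.1, lt_of_le_of_lt hx.2 hA1⟩))
  set m₁ : ℝ := hh β k x₀ with hm₁def
  have hm₁ : 0 < m₁ := hh_pos (lt_of_lt_of_le hB0 hx₀.1) (lt_of_le_of_lt hx₀.2 hA1)
  have hlow : ∀ r ∈ Ioo (0:ℝ) A, m₁ ≤ hh β k r := by
    intro r hr
    rcases le_or_gt r B with hrB | hBr
    · exact le_trans (hmin ⟨le_refl B, hBA⟩) (hh_mono r hr.1 hrB)
    · exact hmin ⟨hBr.le, hr.2.le⟩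
  set C₀ : ℝ := ∫ ρ in Ioc B A, gg β k ρ with hC₀def
  have hC₀ : 0 ≤ C₀ := setIntegral_nonneg measurableSet_Ioc
    (fun x hx => (gg_pos (lt_of_lt_of_le hB0 hx.1.le) (lt_of_le_of_lt hx.2 hA1)).le)
  refine ⟨2 / β + C₀ / m₁ + 1, by positivity, ?_⟩
  intro r hr
  have hr0 : 0 < r := hr.1
  have hrA : r < A := hr.2
  have hr1 : r < 1 := lt_trans hrA hA1
  have hhr : 0 < hh β k r := hh_pos hr0 hr1
  have hC₀le : C₀ ≤ C₀ / m₁ * hh β k r := by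
    have h1 : C₀ / m₁ * m₁ ≤ C₀ / m₁ * hh β k r :=
      mul_le_mul_of_nonneg_left (hlow r hr) (by positivity)
    rw [div_mul_cancel₀ _ hm₁.ne'] at h1
    exact h1
  have hIoo : ∫ ρ in Ioo r A, gg β k ρ = ∫ ρ in r..A, gg β k ρ := by
    rw [intervalIntegral.integral_of_le hrA.le, integral_Ioc_eq_integral_Ioo]
  rw [hIoo]
  rcases le_or_gt r B with hrB | hBr
  · -- split at B
    have hsplit : (∫ ρ in r..B, gg β k ρ) + ∫ ρ in B..A, gg β k ρ = ∫ ρ in r..A, gg β k ρ :=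
      intervalIntegral.integral_add_adjacent_intervals (hint r B hr0 hrB hB1)
        (hint B A hB0 hBA hA1)
    have h1 : ∫ ρ in B..A, gg β k ρ = C₀ := intervalIntegral.integral_of_le hBA
    have h2 := hmain r hr0 hrB
    rw [← hsplit, h1]
    nlinarith
  · -- r ≥ B : integral over Ioc r A ≤ C₀
    have h1 : ∫ ρ in r..A, gg β k ρ ≤ C₀ := by
      rw [intervalIntegral.integral_of_le hrA.le]
      apply setIntegral_mono_set (hint B A hB0 hBA hA1).1
      · exact (ae_restrict_iff' measurableSet_Ioc).2 (ae_of_all _ fun x hx =>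
          (gg_pos (lt_of_lt_of_le hB0 hx.1.le) (lt_of_le_of_lt hx.2 hA1)).le)
      · exact HasSubset.Subset.eventuallyLE (Ioc_subset_Ioc_left hBr.le)
    have h2 : (0:ℝ) ≤ 2 / β * hh β k r := by positivity
    nlinarith

lemma phi_lemma (A : ℝ) (hA0 : 0 < A) (hA1 : A < 1) :
    IntegrableOn (fun r : ℝ => r⁻¹ * (-Real.log r) ^ (-2 : ℤ)) (Ioo 0 A) ∧
    ∫ r in Ioo (0:ℝ) A, r⁻¹ * (-Real.log r) ^ (-2 : ℤ) ≤ (-Real.log A)⁻¹ := by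
  set φ : ℝ → ℝ := fun r => r⁻¹ * (-Real.log r) ^ (-2 : ℤ) with hφdef
  have hφpos : ∀ x : ℝ, 0 < x → x < 1 → 0 < φ x := fun x h0 h1 =>
    mul_pos (inv_pos.2 h0) (zpow_pos (neglog_pos h0 h1) _)
  have hderiv : ∀ x : ℝ, 0 < x → x < 1 → HasDerivAt (fun r => (-Real.log r)⁻¹) (φ x) x := by
    intro x h0 h1
    have hL : 0 < -Real.log x := neglog_pos h0 h1
    have dlog : HasDerivAt (fun r : ℝ => -Real.log r) (-x⁻¹) x := (Real.hasDerivAt_log h0.ne').neg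
    have hd := dlog.inv hL.ne'
    have e : φ x = - -x⁻¹ / (-Real.log x) ^ 2 := by
      rw [hφdef]
      simp only
      rw [zpow_neg, show ((2:ℤ) : ℤ) = ((2:ℕ) : ℤ) from rfl, zpow_natCast]
      field_simp
    rw [e]
    exact hd
  have hcont : ∀ ε : ℝ, 0 < ε → ContinuousOn φ (Icc ε A) := by
    intro ε hε
    apply ContinuousOn.mul
    · exact continuousOn_inv₀.mono fun x hx => (lt_of_lt_of_le hε hx.1).ne'
    · apply ContinuousOn.zpow₀
      · exact (Real.continuousOn_log.mono fun x hx => (lt_of_lt_of_le hε hx.1).ne').neg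
      · exact fun x hx => Or.inl (neglog_pos (lt_of_lt_of_le hε hx.1)
          (lt_of_le_of_lt hx.2 hA1)).ne'
  have hIcc : ∀ ε : ℝ, 0 < ε → ε ≤ A → IntegrableOn φ (Ioc ε A) := fun ε hε hεA =>
    ((hcont ε hε).integrableOn_Icc).mono_set Ioc_subset_Icc_self
  have hval : ∀ ε : ℝ, 0 < ε → ε ≤ A → ∫ r in Ioc ε A, φ r ≤ (-Real.log A)⁻¹ := by
    intro ε hε hεA
    have hε1 : ε < 1 := lt_of_le_of_lt hεA hA1
    have hftc : ∫ r in ε..A, φ r = (-Real.log A)⁻¹ - (-Real.log ε)⁻¹ := by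
      apply intervalIntegral.integral_eq_sub_of_hasDerivAt
      · intro x hx
        rw [uIcc_of_le hεA] at hx
        exact hderiv x (lt_of_lt_of_le hε hx.1) (lt_of_le_of_lt hx.2 hA1)
      · exact (hcont ε hε).intervalIntegrable_of_Icc hεA
    have h2 : (0:ℝ) ≤ (-Real.log ε)⁻¹ := (inv_pos.2 (neglog_pos hε hε1)).le
    rw [← intervalIntegral.integral_of_le hεA, hftc]
    linarith
  -- sequence εᵢ = A/(i+2)
  have hseq : Filter.Tendsto (fun i : ℕ => A / (i + 2 : ℝ)) Filter.atTop (nhds 0) := by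
    apply Filter.Tendsto.div_atTop tendsto_const_nhds
    exact Filter.tendsto_atTop_add_const_right _ 2 tendsto_natCast_atTop_atTop
  have hεpos : ∀ i : ℕ, 0 < A / (i + 2 : ℝ) := fun i => by positivity
  have hεle : ∀ i : ℕ, A / (i + 2 : ℝ) ≤ A := by
    intro i
    rw [div_le_iff₀ (by positivity)]
    nlinarith [Nat.cast_nonneg (α := ℝ) i]
  have hnorm : ∀ ε : ℝ, 0 < ε → ε ≤ A → ∫ r in Ioc ε A, ‖φ r‖ = ∫ r in Ioc ε A, φ r := by
    intro ε hε hεA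
    apply setIntegral_congr_fun measurableSet_Ioc
    intro x hx
    exact Real.norm_of_nonneg (hφpos x (lt_of_lt_of_le hε hx.1.le)
      (lt_of_le_of_lt hx.2 hA1)).le
  have hintIoc : IntegrableOn φ (Ioc 0 A) := by
    apply integrableOn_Ioc_of_intervalIntegral_norm_bounded_left
      (I := (-Real.log A)⁻¹) (fun i => hIcc _ (hεpos i) (hεle i)) hseq
    · filter_upwards with i
      rw [hnorm _ (hεpos i) (hεle i)]
      exact hval _ (hεpos i) (hεle i)
  have hint : IntegrableOn φ (Ioo 0 A) := hintIoc.mono_set Ioo_subset_Ioc_self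
  refine ⟨hint, ?_⟩
  -- value bound via monotone convergence
  have hmono : Monotone fun i : ℕ => Ioc (A / (i + 2 : ℝ)) A := by
    intro i j hij
    apply Ioc_subset_Ioc_left
    apply div_le_div_of_nonneg_left hA0.le (by positivity)
    have : (i:ℝ) ≤ (j:ℝ) := Nat.cast_le.2 hij
    linarith
  have hunion : (⋃ i : ℕ, Ioc (A / (i + 2 : ℝ)) A) = Ioc 0 A := by
    ext x
    simp only [mem_iUnion, mem_Ioc]
    constructor
    · rintro ⟨i, h1, h2⟩
      exact ⟨lt_trans (hεpos i) h1, h2⟩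
    · rintro ⟨hx0, hxA⟩
      obtain ⟨i, hi⟩ := exists_nat_gt (A / x)
      refine ⟨i, ?_, hxA⟩
      rw [div_lt_iff₀ (by positivity)]
      have := (div_lt_iff₀ hx0).1 hi
      nlinarith
  have htend := tendsto_setIntegral_of_monotone (fun i => measurableSet_Ioc) hmono
    (by rw [hunion]; exact hintIoc)
  rw [hunion] at htend
  have hle : ∫ r in Ioc (0:ℝ) A, φ r ≤ (-Real.log A)⁻¹ :=
    le_of_tendsto htend (Filter.Eventually.of_forall fun i => hval _ (hεpos i) (hεle i))
  rwa [integral_Ioc_eq_integral_Ioo] at hle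

lemma contOn_aux2 (a : ℝ) (m : ℤ) {s : Set ℝ} (hs : ∀ x ∈ s, 0 < x ∧ x < 1) :
    ContinuousOn (fun ρ : ℝ => (-Real.log ρ) ^ m * ρ ^ a) s := by
  apply ContinuousOn.mul
  · apply ContinuousOn.zpow₀
    · exact (Real.continuousOn_log.mono fun x hx => (hs x hx).1.ne').neg
    · exact fun x hx => Or.inl (neglog_pos (hs x hx).1 (hs x hx).2).ne'
  · exact ContinuousOn.rpow_const continuousOn_id fun x hx => Or.inl (hs x hx).1.ne'

lemma rpow_two' (x : ℝ) : x ^ (2:ℝ) = x ^ 2 := by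
  rw [show (2:ℝ) = ((2:ℕ):ℝ) by norm_num, Real.rpow_natCast]

lemma half_pow {x : ℝ} (hx : 0 ≤ x) : (x ^ ((1:ℝ)/2)) ^ 2 = x := by
  rw [← Real.rpow_natCast (x ^ ((1:ℝ)/2)) 2, ← Real.rpow_mul hx]
  norm_num

/-- Weighted Hardy-type inequality, case `n > 0`, from the proof of Lemma 3. -/
theorem stmt_2 (n : ℤ) (hn : 0 < n) (α : ℝ) (hα0 : 0 < α) (hα1 : α < 1)
    (k : ℤ) (A : ℝ) (hA0 : 0 < A) (hA1 : A < 1) :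
    ∃ C : ℝ, 0 < C ∧ ∀ f : ℝ → ℂ, Measurable f →
      IntegrableOn (fun ρ : ℝ => ‖f ρ‖ ^ 2 * (-Real.log ρ) ^ k * ρ ^ (1 + α)) (Ioo 0 A) →
      ((∀ r ∈ Ioo (0 : ℝ) A,
          IntegrableOn (fun ρ : ℝ => (ρ ^ (-n) : ℝ) • f ρ) (Ioo r A)) ∧
        ∫ r in Ioo (0 : ℝ) A,
            ‖(-(2 * r ^ n) : ℝ) • ∫ ρ in Ioo r A, (ρ ^ (-n) : ℝ) • f ρ‖ ^ 2
              * (-Real.log r) ^ (k - 2) * r ^ (-1 + α)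
          ≤ C * ∫ ρ in Ioo (0 : ℝ) A, ‖f ρ‖ ^ 2 * (-Real.log ρ) ^ k * ρ ^ (1 + α)) := by
  have hlogA : 0 < -Real.log A := neglog_pos hA0 hA1
  have hn1 : (1:ℝ) ≤ (n:ℝ) := by exact_mod_cast hn
  set β : ℝ := 2 * (n:ℝ) + α with hβdef
  have hβ : 0 < β := by rw [hβdef]; linarith
  obtain ⟨C₂, hC₂, hkey⟩ := key_bound β hβ k A hA0 hA1
  obtain ⟨hφint, hφval⟩ := phi_lemma A hA0 hA1
  have hmlog : Measurable fun x : ℝ => -Real.log x := Real.measurable_log.neg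
  refine ⟨4 * C₂ * (-Real.log A)⁻¹, by positivity, fun f hf hInt => ?_⟩
  set If := ∫ ρ in Ioo (0:ℝ) A, ‖f ρ‖ ^ 2 * (-Real.log ρ) ^ k * ρ ^ (1 + α) with hIfdef
  have hwpos : ∀ x ∈ Ioo (0:ℝ) A, 0 ≤ ‖f x‖ ^ 2 * (-Real.log x) ^ k * x ^ (1 + α) := by
    intro x hx
    have hL := neglog_pos hx.1 (lt_trans hx.2 hA1)
    have := Real.rpow_nonneg hx.1.le (1 + α)
    positivity
  have hIf0 : 0 ≤ If := setIntegral_nonneg measurableSet_Ioo hwpos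
  -- part (a): integrability
  have parta : ∀ r ∈ Ioo (0 : ℝ) A,
      IntegrableOn (fun ρ : ℝ => (ρ ^ (-n) : ℝ) • f ρ) (Ioo r A) := by
    intro r hr
    have hr0 : 0 < r := hr.1
    have hrA : r < A := hr.2
    have hsub : Ioo r A ⊆ Ioo 0 A := Ioo_subset_Ioo hr0.le le_rfl
    have hicc : ∀ x ∈ Icc r A, 0 < x ∧ x < 1 :=
      fun x hx => ⟨lt_of_lt_of_le hr0 hx.1, lt_of_le_of_lt hx.2 hA1⟩
    obtain ⟨x₀, hx₀, hminw⟩ := isCompact_Icc.exists_isMinOn (⟨r, le_refl r, hrA.le⟩ :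
      (Icc r A).Nonempty) (contOn_aux2 (1+α) k hicc)
    set c : ℝ := (-Real.log x₀) ^ k * x₀ ^ (1+α) with hcdef
    have hc : 0 < c := mul_pos (zpow_pos (neglog_pos (hicc x₀ hx₀).1 (hicc x₀ hx₀).2) _)
      (Real.rpow_pos_of_pos (hicc x₀ hx₀).1 _)
    have h1 : IntegrableOn (fun ρ : ℝ => ‖f ρ‖ ^ 2) (Ioo r A) := by
      apply Integrable.mono' (((hInt.mono_set hsub)).const_mul c⁻¹)
      · exact ((hf.norm.pow_const 2)).aestronglyMeasurable
      · rw [ae_restrict_iff' measurableSet_Ioo]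
        apply ae_of_all
        intro x hx
        have hcw : c ≤ (-Real.log x) ^ k * x ^ (1+α) := hminw ⟨hx.1.le, hx.2.le⟩
        have h2 := mul_le_mul_of_nonneg_left hcw (inv_nonneg.2 hc.le)
        rw [inv_mul_cancel₀ hc.ne'] at h2
        have h3 : ‖f x‖ ^ 2 * 1 ≤ ‖f x‖ ^ 2 * (c⁻¹ * ((-Real.log x) ^ k * x ^ (1+α))) :=
          mul_le_mul_of_nonneg_left h2 (by positivity)
        rw [Real.norm_of_nonneg (by positivity : (0:ℝ) ≤ ‖f x‖ ^ 2)]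
        calc ‖f x‖ ^ 2 = ‖f x‖ ^ 2 * 1 := by ring
          _ ≤ ‖f x‖ ^ 2 * (c⁻¹ * ((-Real.log x) ^ k * x ^ (1+α))) := h3
          _ = c⁻¹ * (‖f x‖ ^ 2 * (-Real.log x) ^ k * x ^ (1+α)) := by ring
    have hconst : IntegrableOn (fun _ : ℝ => (1:ℝ)) (Ioo r A) :=
      integrableOn_const measure_Ioo_lt_top.ne
    have h2 : IntegrableOn (fun ρ : ℝ => r ^ (-n) * (1 + ‖f ρ‖ ^ 2)) (Ioo r A) := by
      apply Integrable.const_mul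
      exact hconst.add h1
    apply Integrable.mono' h2
    · exact (Measurable.aestronglyMeasurable (by fun_prop))
    · rw [ae_restrict_iff' measurableSet_Ioo]
      apply ae_of_all
      intro x hx
      have hx0 : 0 < x := lt_trans hr0 hx.1
      have hxn : (0:ℝ) < x ^ (-n) := zpow_pos hx0 _
      have hrn : (0:ℝ) < r ^ (-n) := zpow_pos hr0 _
      have hmono : x ^ (-n) ≤ r ^ (-n) := by
        rw [zpow_neg, zpow_neg]
        have h4 : (0:ℝ) < r ^ n := zpow_pos hr0 _
        have h5 : r ^ n ≤ x ^ n := by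
          rw [show n = (n.toNat : ℤ) from (Int.toNat_of_nonneg hn.le).symm, zpow_natCast,
            zpow_natCast]
          exact pow_le_pow_left₀ hr0.le hx.1.le _
        exact inv_anti₀ h4 h5
      rw [norm_smul, Real.norm_eq_abs, abs_of_pos hxn]
      have h6 : ‖f x‖ ≤ 1 + ‖f x‖ ^ 2 := by nlinarith [sq_nonneg (‖f x‖ - 1), norm_nonneg (f x)]
      exact mul_le_mul hmono h6 (norm_nonneg _) hrn.le
  refine ⟨parta, ?_⟩
  have ecast : ∀ m : ℤ, ((m : ℤ) : ℝ) = (m : ℝ) := fun m => rfl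
  -- Cauchy-Schwarz bound per r
  have hCS : ∀ r ∈ Ioo (0:ℝ) A,
      ‖∫ ρ in Ioo r A, (ρ ^ (-n) : ℝ) • f ρ‖ ^ 2 ≤ C₂ * hh β k r * If := by
    intro r hr
    have hr0 : 0 < r := hr.1
    have hrA : r < A := hr.2
    have hr1 : r < 1 := lt_trans hrA hA1
    have hsub : Ioo r A ⊆ Ioo 0 A := Ioo_subset_Ioo hr0.le le_rfl
    have hicc : ∀ x ∈ Icc r A, 0 < x ∧ x < 1 :=
      fun x hx => ⟨lt_of_lt_of_le hr0 hx.1, lt_of_le_of_lt hx.2 hA1⟩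
    have hioo : ∀ x ∈ Ioo r A, 0 < x ∧ x < 1 := fun x hx => hicc x (Ioo_subset_Icc_self hx)
    set P : ℝ → ℝ := fun ρ => ρ ^ ((-β - 1)/2) * (-Real.log ρ) ^ ((-(k:ℝ))/2) with hPdef
    set Q : ℝ → ℝ := fun ρ => ‖f ρ‖ * (ρ ^ ((1+α)/2) * (-Real.log ρ) ^ ((k:ℝ)/2)) with hQdef
    have hPm : Measurable P := by rw [hPdef]; fun_prop
    have hQm : Measurable Q := by rw [hQdef]; fun_prop
    have hPnn : ∀ x ∈ Ioo r A, 0 ≤ P x := by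
      intro x hx
      have h1 := (hioo x hx).1
      have h2 := neglog_pos (hioo x hx).1 (hioo x hx).2
      rw [hPdef]
      exact mul_nonneg (Real.rpow_nonneg h1.le _) (Real.rpow_nonneg h2.le _)
    have hQnn : ∀ x ∈ Ioo r A, 0 ≤ Q x := by
      intro x hx
      have h1 := (hioo x hx).1
      have h2 := neglog_pos (hioo x hx).1 (hioo x hx).2
      rw [hQdef]
      exact mul_nonneg (norm_nonneg _)
        (mul_nonneg (Real.rpow_nonneg h1.le _) (Real.rpow_nonneg h2.le _))
    have hPQ : ∀ x ∈ Ioo r A, ‖(x ^ (-n) : ℝ) • f x‖ = P x * Q x := by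
      intro x hx
      have hx0 := (hioo x hx).1
      have hL := neglog_pos (hioo x hx).1 (hioo x hx).2
      have ex : x ^ ((-β - 1)/2) * x ^ ((1+α)/2) = x ^ (-(n:ℝ)) := by
        rw [← Real.rpow_add hx0]
        congr 1
        rw [hβdef]; ring
      have eL : (-Real.log x) ^ ((-(k:ℝ))/2) * (-Real.log x) ^ ((k:ℝ)/2) = 1 := by
        rw [← Real.rpow_add hL, show (-(k:ℝ))/2 + (k:ℝ)/2 = 0 by ring, Real.rpow_zero]
      have exn : x ^ (-(n:ℝ)) = x ^ (-n : ℤ) := by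
        rw [← Real.rpow_intCast x (-n)]
        congr 1
        push_cast; ring
      rw [norm_smul, Real.norm_eq_abs, abs_of_pos (zpow_pos hx0 (-n))]
      calc x ^ (-n) * ‖f x‖ = x ^ (-(n:ℝ)) * 1 * ‖f x‖ := by rw [exn]; ring
        _ = (x ^ ((-β - 1)/2) * x ^ ((1+α)/2))
            * ((-Real.log x) ^ ((-(k:ℝ))/2) * (-Real.log x) ^ ((k:ℝ)/2)) * ‖f x‖ := by
          rw [ex, eL]
        _ = P x * Q x := by rw [hPdef, hQdef]; ring
    have hP2 : ∀ x ∈ Ioo r A, P x ^ (2:ℝ) = gg β k x := by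
      intro x hx
      have hx0 := (hioo x hx).1
      have hL := neglog_pos (hioo x hx).1 (hioo x hx).2
      rw [hPdef]
      simp only
      rw [Real.mul_rpow (Real.rpow_nonneg hx0.le _) (Real.rpow_nonneg hL.le _),
        ← Real.rpow_mul hx0.le, ← Real.rpow_mul hL.le,
        show (-β - 1)/2*2 = -β - 1 by ring, show (-(k:ℝ))/2*2 = -(k:ℝ) by ring]
      unfold gg
      congr 1
      rw [← Real.rpow_intCast (-Real.log x) (-k)]
      congr 1
      push_cast; ring
    have hQ2 : ∀ x ∈ Ioo r A,
        Q x ^ (2:ℝ) = ‖f x‖ ^ 2 * (-Real.log x) ^ k * x ^ (1+α) := by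
      intro x hx
      have hx0 := (hioo x hx).1
      have hL := neglog_pos (hioo x hx).1 (hioo x hx).2
      rw [hQdef]
      simp only
      rw [Real.mul_rpow (norm_nonneg _)
          (mul_nonneg (Real.rpow_nonneg hx0.le _) (Real.rpow_nonneg hL.le _)),
        Real.mul_rpow (Real.rpow_nonneg hx0.le _) (Real.rpow_nonneg hL.le _),
        ← Real.rpow_mul hx0.le, ← Real.rpow_mul hL.le,
        show (1+α)/2*2 = 1+α by ring, show (k:ℝ)/2*2 = (k:ℝ) by ring,
        rpow_two', Real.rpow_intCast]
      ring
    have hggInt : IntegrableOn (gg β k) (Ioo r A) :=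
      ((contOn_gg β k hicc).integrableOn_Icc).mono_set Ioo_subset_Icc_self
    have hPmem : MemLp P 2 (volume.restrict (Ioo r A)) := by
      apply (memLp_two_iff_integrable_sq hPm.aestronglyMeasurable).2
      exact hggInt.congr_fun (fun x hx => by rw [← hP2 x hx, rpow_two']) measurableSet_Ioo
    have hQmem : MemLp Q 2 (volume.restrict (Ioo r A)) := by
      apply (memLp_two_iff_integrable_sq hQm.aestronglyMeasurable).2
      exact (hInt.mono_set hsub).congr_fun
        (fun x hx => by beta_reduce; rw [← hQ2 x hx, rpow_two']) measurableSet_Ioo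
    have h22 : (2:ℝ).HolderConjugate 2 := Real.HolderConjugate.two_two
    have hCS' := integral_mul_le_Lp_mul_Lq_of_nonneg h22
      ((ae_restrict_iff' measurableSet_Ioo).2 (ae_of_all _ hPnn))
      ((ae_restrict_iff' measurableSet_Ioo).2 (ae_of_all _ hQnn))
      (by simpa using hPmem) (by simpa using hQmem)
    have e0 : ∫ a in Ioo r A, ‖(a ^ (-n):ℝ) • f a‖ = ∫ a in Ioo r A, P a * Q a :=
      setIntegral_congr_fun measurableSet_Ioo hPQ
    have eP : ∫ a in Ioo r A, P a ^ (2:ℝ) = ∫ a in Ioo r A, gg β k a :=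
      setIntegral_congr_fun measurableSet_Ioo hP2
    have eQ : ∫ a in Ioo r A, Q a ^ (2:ℝ)
        = ∫ a in Ioo r A, ‖f a‖ ^ 2 * (-Real.log a) ^ k * a ^ (1+α) :=
      setIntegral_congr_fun measurableSet_Ioo hQ2
    have hgg0 : 0 ≤ ∫ a in Ioo r A, gg β k a := setIntegral_nonneg measurableSet_Ioo
      (fun x hx => (gg_pos (hioo x hx).1 (hioo x hx).2).le)
    have hggC : ∫ a in Ioo r A, gg β k a ≤ C₂ * hh β k r := hkey r hr
    have hQ0 : 0 ≤ ∫ a in Ioo r A, ‖f a‖ ^ 2 * (-Real.log a) ^ k * a ^ (1+α) :=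
      setIntegral_nonneg measurableSet_Ioo (fun x hx => hwpos x (hsub hx))
    have hQIf : ∫ a in Ioo r A, ‖f a‖ ^ 2 * (-Real.log a) ^ k * a ^ (1+α) ≤ If :=
      setIntegral_mono_set hInt
        ((ae_restrict_iff' measurableSet_Ioo).2 (ae_of_all _ hwpos))
        (HasSubset.Subset.eventuallyLE hsub)
    have hChh : 0 ≤ C₂ * hh β k r := (mul_pos hC₂ (hh_pos hr0 hr1)).le
    have hnorm : ‖∫ ρ in Ioo r A, (ρ ^ (-n):ℝ) • f ρ‖
        ≤ (C₂ * hh β k r) ^ ((1:ℝ)/2) * If ^ ((1:ℝ)/2) :=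
      calc ‖∫ ρ in Ioo r A, (ρ ^ (-n):ℝ) • f ρ‖
          ≤ ∫ a in Ioo r A, ‖(a ^ (-n):ℝ) • f a‖ := norm_integral_le_integral_norm _
        _ = ∫ a in Ioo r A, P a * Q a := e0
        _ ≤ (∫ a in Ioo r A, P a ^ (2:ℝ)) ^ ((1:ℝ)/2)
            * (∫ a in Ioo r A, Q a ^ (2:ℝ)) ^ ((1:ℝ)/2) := hCS'
        _ = (∫ a in Ioo r A, gg β k a) ^ ((1:ℝ)/2)
            * (∫ a in Ioo r A, ‖f a‖ ^ 2 * (-Real.log a) ^ k * a ^ (1+α)) ^ ((1:ℝ)/2) := by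
            rw [eP, eQ]
        _ ≤ (C₂ * hh β k r) ^ ((1:ℝ)/2) * If ^ ((1:ℝ)/2) :=
            mul_le_mul (Real.rpow_le_rpow hgg0 hggC (by norm_num))
              (Real.rpow_le_rpow hQ0 hQIf (by norm_num))
              (Real.rpow_nonneg hQ0 _) (Real.rpow_nonneg hChh _)
    have hfin := pow_le_pow_left₀ (norm_nonneg _) hnorm 2
    rwa [mul_pow, half_pow hChh, half_pow hIf0] at hfin
  -- pointwise domination
  have hdom : ∀ r ∈ Ioo (0:ℝ) A,
      ‖(-(2 * r ^ n) : ℝ) • ∫ ρ in Ioo r A, (ρ ^ (-n) : ℝ) • f ρ‖ ^ 2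
        * (-Real.log r) ^ (k - 2) * r ^ (-1 + α)
      ≤ 4 * C₂ * If * (r⁻¹ * (-Real.log r) ^ (-2:ℤ)) := by
    intro r hr
    have hr0 : 0 < r := hr.1
    have hr1 : r < 1 := lt_trans hr.2 hA1
    have hL : 0 < -Real.log r := neglog_pos hr0 hr1
    have hrn : (0:ℝ) < r ^ n := zpow_pos hr0 _
    have h2rn : (0:ℝ) < 2 * r ^ n := by linarith
    have hLk2 : (0:ℝ) ≤ (-Real.log r) ^ (k - 2) := (zpow_pos hL _).le
    have hra : (0:ℝ) ≤ r ^ (-1+α) := (Real.rpow_pos_of_pos hr0 _).le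
    have e1 : ‖(-(2 * r ^ n) : ℝ) • ∫ ρ in Ioo r A, (ρ ^ (-n):ℝ) • f ρ‖ ^ 2
        = (2 * r ^ n) ^ 2 * ‖∫ ρ in Ioo r A, (ρ ^ (-n):ℝ) • f ρ‖ ^ 2 := by
      rw [norm_smul, Real.norm_eq_abs, abs_neg, abs_of_pos h2rn, mul_pow]
    have hb := hCS r hr
    have step : ‖(-(2 * r ^ n) : ℝ) • ∫ ρ in Ioo r A, (ρ ^ (-n):ℝ) • f ρ‖ ^ 2
        * (-Real.log r) ^ (k - 2) * r ^ (-1 + α)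
        ≤ ((2 * r ^ n) ^ 2 * (C₂ * hh β k r * If)) * (-Real.log r) ^ (k - 2)
          * r ^ (-1 + α) := by
      rw [e1]
      apply mul_le_mul_of_nonneg_right _ hra
      apply mul_le_mul_of_nonneg_right _ hLk2
      exact mul_le_mul_of_nonneg_left hb (by positivity)
    refine le_trans step (le_of_eq ?_)
    have e2 : (r ^ n * r ^ n : ℝ) * r ^ (-β) * r ^ (-1+α) = r⁻¹ := by
      rw [← zpow_add₀ hr0.ne', ← Real.rpow_intCast r (n+n), ← Real.rpow_add hr0,
        ← Real.rpow_add hr0,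
        show ((n+n:ℤ):ℝ) + -β + (-1+α) = -1 by push_cast [hβdef]; ring,
        Real.rpow_neg_one]
    have e3 : (-Real.log r) ^ (-k) * (-Real.log r) ^ (k - 2) = (-Real.log r) ^ (-2:ℤ) := by
      rw [← zpow_add₀ hL.ne', show -k + (k - 2) = (-2:ℤ) by ring]
    calc ((2 * r ^ n) ^ 2 * (C₂ * hh β k r * If)) * (-Real.log r) ^ (k - 2) * r ^ (-1 + α)
        = 4 * C₂ * If * ((r ^ n * r ^ n) * r ^ (-β) * r ^ (-1+α))
          * ((-Real.log r) ^ (-k) * (-Real.log r) ^ (k - 2)) := by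
          simp only [hh]; ring
      _ = 4 * C₂ * If * (r⁻¹ * (-Real.log r) ^ (-2:ℤ)) := by rw [e2, e3]; ring
  -- conclusion
  have hLHSnn : ∀ r ∈ Ioo (0:ℝ) A,
      (0:ℝ) ≤ ‖(-(2 * r ^ n) : ℝ) • ∫ ρ in Ioo r A, (ρ ^ (-n) : ℝ) • f ρ‖ ^ 2
        * (-Real.log r) ^ (k - 2) * r ^ (-1 + α) := by
    intro r hr
    have hL := neglog_pos hr.1 (lt_trans hr.2 hA1)
    exact mul_nonneg (mul_nonneg (pow_nonneg (norm_nonneg _) 2) (zpow_nonneg hL.le _))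
      (Real.rpow_nonneg hr.1.le _)
  have hmono := integral_mono_of_nonneg
    ((ae_restrict_iff' measurableSet_Ioo).2 (ae_of_all _ hLHSnn))
    ((hφint.const_mul (4 * C₂ * If)))
    ((ae_restrict_iff' measurableSet_Ioo).2 (ae_of_all _ hdom))
  calc ∫ r in Ioo (0:ℝ) A,
        ‖(-(2 * r ^ n) : ℝ) • ∫ ρ in Ioo r A, (ρ ^ (-n) : ℝ) • f ρ‖ ^ 2
          * (-Real.log r) ^ (k - 2) * r ^ (-1 + α)
      ≤ ∫ r in Ioo (0:ℝ) A, 4 * C₂ * If * (r⁻¹ * (-Real.log r) ^ (-2:ℤ)) := hmono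
    _ = 4 * C₂ * If * ∫ r in Ioo (0:ℝ) A, r⁻¹ * (-Real.log r) ^ (-2:ℤ) :=
        integral_const_mul _ _
    _ ≤ 4 * C₂ * If * (-Real.log A)⁻¹ :=
        mul_le_mul_of_nonneg_left hφval (by positivity)
    _ = 4 * C₂ * (-Real.log A)⁻¹ * If := by ring
end

section
/- Let 0<α<1, k∈ℤ, and 0<A<1. Then there exists a constant C>0 such that for every measurable function f:(0,A)→ℂ and every r∈(0,A), one has the pointwise Cauchy–Schwarz bound (∫_r^A |f(ρ)| dρ)² ≤ C · (∫_r^A |f(ρ)|² |log ρ|^{1+k} ρ^{1+α} dρ) · r^{-α} |log r|^{-k}. -/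
open MeasureTheory Set Real
open scoped ENNReal NNReal

lemma measurable_zpow_real (m : ℤ) : Measurable fun x : ℝ => x ^ m := by
  cases m with
  | ofNat n => simpa using measurable_id.pow_const n
  | negSucc n =>
      simp only [zpow_negSucc]
      exact (measurable_id.pow_const (n+1)).inv

lemma aux_pos {x : ℝ} (hx0 : 0 < x) (hx1 : x < 1) : 0 < -Real.log x := by
  have := Real.log_neg hx0 hx1; linarith

lemma aux_rpow_contOn (c : ℝ) {a b : ℝ} (ha : 0 < a) :
    ContinuousOn (fun x : ℝ => x ^ c) (Icc a b) := fun x hx =>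
  (Real.continuousAt_rpow_const x c (Or.inl (ne_of_gt (lt_of_lt_of_le ha hx.1)))).continuousWithinAt

lemma aux_zpow_contOn (m : ℤ) {a b : ℝ} (ha : 0 < a) (hb : b < 1) :
    ContinuousOn (fun x : ℝ => (-Real.log x) ^ m) (Icc a b) := by
  intro x hx
  have hx0 : 0 < x := lt_of_lt_of_le ha hx.1
  have hlog : 0 < -Real.log x := aux_pos hx0 (lt_of_le_of_lt hx.2 hb)
  have hneg : ContinuousAt (fun y : ℝ => -Real.log y) x := (Real.continuousAt_log hx0.ne').neg
  have hz : ContinuousAt (fun y : ℝ => y ^ m) (-Real.log x) :=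
    continuousAt_zpow₀ _ m (Or.inl hlog.ne')
  have : ContinuousAt (fun y : ℝ => (-Real.log y) ^ m) x := by
    unfold ContinuousAt
    exact Filter.Tendsto.comp hz hneg
  exact this.continuousWithinAt

lemma aux_lb (α : ℝ) (hα0 : 0 < α) (k : ℤ) (A : ℝ) (hA0 : 0 < A) (hA1 : A < 1) :
    ∃ c : ℝ, 0 < c ∧ ∀ r ∈ Ioo (0:ℝ) A, c ≤ r ^ (-α) * (-Real.log r) ^ (-k) := by
  rcases le_or_gt k 0 with hk | hk
  · -- k ≤ 0 : use c = (-log A)^(-k)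
    obtain ⟨n, hn⟩ := Int.eq_ofNat_of_zero_le (by omega : (0:ℤ) ≤ -k)
    have hLA : 0 < -Real.log A := aux_pos hA0 hA1
    refine ⟨(-Real.log A) ^ (-k), zpow_pos hLA _, ?_⟩
    intro r hr
    have hr0 : 0 < r := hr.1
    have hr1 : r < 1 := hr.2.trans hA1
    have hu : 0 < -Real.log r := aux_pos hr0 hr1
    have hle : -Real.log A ≤ -Real.log r := by
      have := Real.log_le_log hr0 hr.2.le
      linarith
    have hone : (1:ℝ) ≤ r ^ (-α) :=
      Real.one_le_rpow_of_pos_of_le_one_of_nonpos hr0 hr1.le (by linarith)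
    have hpow : (-Real.log A) ^ (-k) ≤ (-Real.log r) ^ (-k) := by
      rw [hn, zpow_natCast, zpow_natCast]
      exact pow_le_pow_left₀ hLA.le hle n
    calc (-Real.log A) ^ (-k) ≤ (-Real.log r) ^ (-k) := hpow
      _ = 1 * (-Real.log r) ^ (-k) := (one_mul _).symm
      _ ≤ r ^ (-α) * (-Real.log r) ^ (-k) :=
          mul_le_mul_of_nonneg_right hone (zpow_pos hu _).le
  · -- k > 0 : use c = (α/k)^k
    set n : ℕ := k.toNat with hn
    have hkn : (k:ℤ) = (n:ℤ) := by omega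
    have hn0 : 0 < (n:ℝ) := by
      have : 0 < n := by omega
      exact_mod_cast this
    refine ⟨(α / n) ^ n, pow_pos (div_pos hα0 hn0) n, ?_⟩
    intro r hr
    have hr0 : 0 < r := hr.1
    have hr1 : r < 1 := hr.2.trans hA1
    have hu : 0 < -Real.log r := aux_pos hr0 hr1
    -- u ≤ (n/α) * r^(-α/n)
    have hrp : 0 < r ^ (-α / (n:ℝ)) := Real.rpow_pos_of_pos hr0 _
    have hlog : Real.log (r ^ (-α / (n:ℝ))) = (-α / n) * Real.log r := Real.log_rpow hr0 _
    have h1 : (α / n) * (-Real.log r) ≤ r ^ (-α / (n:ℝ)) := by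
      have h := Real.log_le_sub_one_of_pos hrp
      rw [hlog] at h
      have hid : -α / (n:ℝ) * Real.log r = α / n * -Real.log r := by ring
      linarith
    have h2 : -Real.log r ≤ (n / α) * r ^ (-α / (n:ℝ)) := by
      have hmul := mul_le_mul_of_nonneg_left h1 (le_of_lt (div_pos hn0 hα0))
      calc -Real.log r = ((n:ℝ) / α) * (α / n * -Real.log r) := by field_simp
        _ ≤ _ := hmul
    -- u^n ≤ (n/α)^n * r^(-α)
    have h3 : (-Real.log r) ^ n ≤ ((n:ℝ) / α) ^ n * r ^ (-α) := by
      have := pow_le_pow_left₀ hu.le h2 n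
      rwa [mul_pow, ← Real.rpow_natCast (r ^ (-α / (n:ℝ))) n, ← Real.rpow_mul hr0.le,
        div_mul_cancel₀ (-α) hn0.ne'] at this
    have hup : 0 < (-Real.log r) ^ n := pow_pos hu n
    have hgoal : (α / n) ^ n * (-Real.log r) ^ n ≤ r ^ (-α) := by
      calc (α / n) ^ n * (-Real.log r) ^ n
          ≤ (α / n) ^ n * (((n:ℝ) / α) ^ n * r ^ (-α)) :=
            mul_le_mul_of_nonneg_left h3 (pow_nonneg (div_nonneg hα0.le hn0.le) n)
        _ = ((α / n) * ((n:ℝ) / α)) ^ n * r ^ (-α) := by ring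
        _ = r ^ (-α) := by
            rw [div_mul_div_comm, mul_comm α (n:ℝ), div_self (by positivity), one_pow, one_mul]
    have hzk : (-Real.log r) ^ (-k) = ((-Real.log r) ^ n)⁻¹ := by
      rw [show (-k : ℤ) = -(n:ℤ) by omega, zpow_neg, zpow_natCast]
    rw [hzk, ← div_eq_mul_inv, le_div_iff₀ hup]
    exact hgoal

lemma aux_deriv (α : ℝ) (k : ℤ) {x : ℝ} (hx0 : 0 < x) (hx1 : x < 1) :
    HasDerivAt (fun ρ : ℝ => ρ ^ (-α) * (-Real.log ρ) ^ (-k))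
      (x ^ (-(1+α)) * (-Real.log x) ^ (-(1+k)) * ((k : ℝ) - α * (-Real.log x))) x := by
  have hu : 0 < -Real.log x := aux_pos hx0 hx1
  have d1 : HasDerivAt (fun ρ : ℝ => ρ ^ (-α)) (-α * x ^ (-α - 1)) x :=
    Real.hasDerivAt_rpow_const (Or.inl hx0.ne')
  have dneg : HasDerivAt (fun ρ : ℝ => -Real.log ρ) (-x⁻¹) x :=
    (Real.hasDerivAt_log hx0.ne').neg
  have dz0 : HasDerivAt (fun y : ℝ => y ^ (-k)) ((-k : ℤ) * (-Real.log x) ^ (-k - 1))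
      (-Real.log x) := hasDerivAt_zpow (-k) _ (Or.inl hu.ne')
  have dz : HasDerivAt (fun ρ : ℝ => (-Real.log ρ) ^ (-k))
      (((-k : ℤ) * (-Real.log x) ^ (-k - 1)) * -x⁻¹) x := by
    have h := dz0.comp x dneg
    exact h
  have total := d1.mul dz
  refine total.congr_deriv (Eq.symm ?_)
  set u := -Real.log x with hudef
  have e1 : x ^ (-α - 1) = x ^ (-(1+α)) := by rw [show -α - 1 = -(1+α) by ring]
  have e2 : u ^ (-k) = u ^ (-(1+k)) * u := by
    rw [show (-k : ℤ) = -(1+k) + 1 by ring, zpow_add₀ hu.ne', zpow_one]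
  have e3 : u ^ (-k - 1) = u ^ (-(1+k)) := by rw [show -k - 1 = -(1+k) by ring]
  have e4 : x ^ (-α) * x⁻¹ = x ^ (-(1+α)) := by
    rw [← Real.rpow_neg_one x, ← Real.rpow_add hx0]
    norm_num
  push_cast
  rw [e1, e2, e3]
  calc x ^ (-(1+α)) * u ^ (-(1+k)) * ((k:ℝ) - α * u)
      = -α * x ^ (-(1+α)) * (u ^ (-(1+k)) * u) + (k:ℝ) * u ^ (-(1+k)) * (x ^ (-α) * x⁻¹) := by
        rw [e4]; ring
    _ = -α * x ^ (-(1+α)) * (u ^ (-(1+k)) * u) + x ^ (-α) * (-(k:ℝ) * u ^ (-(1+k)) * -x⁻¹) := by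
        ring

lemma aux_key (α : ℝ) (hα0 : 0 < α) (k : ℤ) (A : ℝ) (hA0 : 0 < A) (hA1 : A < 1) :
    ∃ C : ℝ, 0 < C ∧ ∀ r ∈ Ioo (0:ℝ) A,
      (∫ x in Ioo r A, x ^ (-(1+α)) * (-Real.log x) ^ (-(1+k)))
        ≤ C * (r ^ (-α) * (-Real.log r) ^ (-k)) := by
  obtain ⟨c₀, hc₀, hlb⟩ := aux_lb α hα0 k A hA0 hA1
  set gp : ℝ → ℝ := fun x => x ^ (-(1+α)) * (-Real.log x) ^ (-(1+k)) with hgp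
  set K : ℝ := max (k:ℝ) 0 with hK
  set B : ℝ := min A (Real.exp (-((K+1)/α))) with hBdef
  have hB0 : 0 < B := lt_min hA0 (Real.exp_pos _)
  have hBA : B ≤ A := min_le_left _ _
  have hB1 : B < 1 := lt_of_le_of_lt hBA hA1
  have hBcond : ∀ x : ℝ, 0 < x → x ≤ B → 1 ≤ α * (-Real.log x) - (k:ℝ) := by
    intro x hx0 hxB
    have h1 : Real.log x ≤ -((K+1)/α) := by
      calc Real.log x ≤ Real.log (Real.exp (-((K+1)/α))) :=
            Real.log_le_log hx0 (hxB.trans (min_le_right _ _))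
        _ = -((K+1)/α) := Real.log_exp _
    have h3 : (K+1)/α ≤ -Real.log x := by linarith
    have h2 : K + 1 ≤ α * (-Real.log x) := by
      calc K + 1 = α * ((K+1)/α) := by field_simp
        _ ≤ α * (-Real.log x) := mul_le_mul_of_nonneg_left h3 hα0.le
    have hkK : (k:ℝ) ≤ K := le_max_left _ _
    linarith
  have hcontBA : ContinuousOn gp (Icc B A) :=
    (aux_rpow_contOn _ hB0).mul (aux_zpow_contOn _ hB0 hA1)
  obtain ⟨x₀, hx₀mem, hx₀max⟩ :=
    isCompact_Icc.exists_isMaxOn (nonempty_Icc.mpr hBA) hcontBA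
  set G : ℝ := gp x₀ with hGdef
  have hx₀0 : 0 < x₀ := lt_of_lt_of_le hB0 hx₀mem.1
  have hx₀1 : x₀ < 1 := lt_of_le_of_lt hx₀mem.2 hA1
  have hG0 : 0 ≤ G :=
    (mul_pos (Real.rpow_pos_of_pos hx₀0 _) (zpow_pos (aux_pos hx₀0 hx₀1) _)).le
  have int_BA : IntegrableOn gp (Icc B A) := hcontBA.integrableOn_Icc
  -- bound for sets inside [B, A]
  have bound2 : ∀ s : Set ℝ, s ⊆ Icc B A → MeasurableSet s → (∫ x in s, gp x) ≤ G * A := by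
    intro s hs hms
    have hvs : volume s ≤ ENNReal.ofReal (A - B) := by
      rw [← Real.volume_Icc]
      exact measure_mono hs
    have hvfin : volume s < ⊤ := lt_of_le_of_lt hvs ENNReal.ofReal_lt_top
    calc (∫ x in s, gp x) ≤ ∫ _ in s, G :=
          setIntegral_mono_on (int_BA.mono_set hs)
            (integrableOn_const hvfin.ne) hms (fun x hx => hx₀max (hs hx))
      _ = (volume s).toReal * G := by rw [setIntegral_const]; rfl
      _ ≤ A * G := by
          have h1 : (volume s).toReal ≤ A - B := by
            have := ENNReal.toReal_mono ENNReal.ofReal_ne_top hvs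
            rwa [ENNReal.toReal_ofReal (by linarith)] at this
          have h2 : (volume s).toReal ≤ A := by linarith
          exact mul_le_mul_of_nonneg_right h2 hG0
      _ = G * A := mul_comm _ _
  refine ⟨1 + G * A / c₀, by positivity, ?_⟩
  intro r hr
  obtain ⟨hr0, hrA⟩ := hr
  have hr1 : r < 1 := hrA.trans hA1
  set base : ℝ := r ^ (-α) * (-Real.log r) ^ (-k) with hbase
  have hbase0 : 0 < base :=
    mul_pos (Real.rpow_pos_of_pos hr0 _) (zpow_pos (aux_pos hr0 hr1) _)
  have hbaselb : c₀ ≤ base := hlb r ⟨hr0, hrA⟩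
  have hGA : G * A ≤ (G * A / c₀) * base := by
    have h1 : (G * A / c₀) * c₀ = G * A := div_mul_cancel₀ _ hc₀.ne'
    calc G * A = (G * A / c₀) * c₀ := h1.symm
      _ ≤ (G * A / c₀) * base := mul_le_mul_of_nonneg_left hbaselb (by positivity)
  by_cases hrB : r < B
  · -- split Ioo r A = Ioo r B ∪ Ico B A
    set D : ℝ → ℝ := fun x => x ^ (-(1+α)) * (-Real.log x) ^ (-(1+k)) *
      ((k:ℝ) - α * (-Real.log x)) with hD
    have hDcont : ContinuousOn D (Icc r B) := by
      refine ((aux_rpow_contOn _ hr0).mul (aux_zpow_contOn _ hr0 hB1)).mul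
        (continuousOn_const.sub (continuousOn_const.mul (ContinuousOn.neg ?_)))
      exact Real.continuousOn_log.mono (fun x hx => by
        simp only [mem_compl_iff, mem_singleton_iff]
        exact ne_of_gt (lt_of_lt_of_le hr0 hx.1))
    have hgpcont : ContinuousOn gp (Icc r B) :=
      (aux_rpow_contOn _ hr0).mul (aux_zpow_contOn _ hr0 hB1)
    have hDint : IntervalIntegrable D volume r B := by
      apply ContinuousOn.intervalIntegrable
      rwa [uIcc_of_le hrB.le]
    have hftc := intervalIntegral.integral_eq_sub_of_hasDerivAt
      (f := fun x : ℝ => x ^ (-α) * (-Real.log x) ^ (-k)) (f' := D) (a := r) (b := B)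
      (fun x hx => by
        rw [uIcc_of_le hrB.le] at hx
        exact aux_deriv α k (lt_of_lt_of_le hr0 hx.1) (lt_of_le_of_lt hx.2 hB1)) hDint
    have hmono : ∀ x ∈ Ioo r B, gp x ≤ -D x := by
      intro x hx
      have hx0 : 0 < x := lt_trans hr0 hx.1
      have hx1 : x < 1 := lt_trans hx.2 hB1
      have hgpnn : 0 ≤ gp x :=
        (mul_pos (Real.rpow_pos_of_pos hx0 _) (zpow_pos (aux_pos hx0 hx1) _)).le
      have hc := hBcond x hx0 hx.2.le
      have : -D x = gp x * (α * (-Real.log x) - (k:ℝ)) := by simp only [hD, hgp]; ring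
      rw [this]
      nlinarith
    have int1 : IntegrableOn gp (Ioo r B) := hgpcont.integrableOn_Icc.mono_set Ioo_subset_Icc_self
    have intD : IntegrableOn (fun x => -D x) (Ioo r B) :=
      hDcont.neg.integrableOn_Icc.mono_set Ioo_subset_Icc_self
    have hBval : 0 ≤ B ^ (-α) * (-Real.log B) ^ (-k) :=
      (mul_pos (Real.rpow_pos_of_pos hB0 _) (zpow_pos (aux_pos hB0 hB1) _)).le
    have piece1 : (∫ x in Ioo r B, gp x) ≤ base := by
      calc (∫ x in Ioo r B, gp x) ≤ ∫ x in Ioo r B, -D x :=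
            setIntegral_mono_on int1 intD measurableSet_Ioo hmono
        _ = ∫ x in Ioc r B, -D x := (integral_Ioc_eq_integral_Ioo).symm
        _ = ∫ x in r..B, -D x := (intervalIntegral.integral_of_le hrB.le).symm
        _ = -(∫ x in r..B, D x) := intervalIntegral.integral_neg
        _ = r ^ (-α) * (-Real.log r) ^ (-k) - B ^ (-α) * (-Real.log B) ^ (-k) := by
            rw [hftc]; ring
        _ ≤ base := by rw [hbase]; linarith
    have hsplit : Ioo r A = Ioo r B ∪ Ico B A := by
      ext x
      constructor
      · rintro ⟨h1, h2⟩
        rcases lt_or_ge x B with h | h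
        · exact Or.inl ⟨h1, h⟩
        · exact Or.inr ⟨h, h2⟩
      · rintro (⟨h1, h2⟩ | ⟨h1, h2⟩)
        · exact ⟨h1, lt_of_lt_of_le h2 hBA⟩
        · exact ⟨lt_of_lt_of_le hrB h1, h2⟩
    have hdisj : Disjoint (Ioo r B) (Ico B A) := by
      rw [Set.disjoint_left]
      rintro x ⟨_, h2⟩ ⟨h3, _⟩
      exact absurd h3 (not_le.mpr h2)
    rw [hsplit, setIntegral_union hdisj measurableSet_Ico int1
      (int_BA.mono_set Ico_subset_Icc_self)]
    have piece2 : (∫ x in Ico B A, gp x) ≤ G * A :=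
      bound2 _ Ico_subset_Icc_self measurableSet_Ico
    calc (∫ x in Ioo r B, gp x) + (∫ x in Ico B A, gp x) ≤ base + G * A := by linarith
      _ ≤ base + (G * A / c₀) * base := by linarith
      _ = (1 + G * A / c₀) * base := by ring
  · -- r ≥ B
    push_neg at hrB
    have hsub : Ioo r A ⊆ Icc B A := fun x hx => ⟨le_trans hrB hx.1.le, hx.2.le⟩
    calc (∫ x in Ioo r A, gp x) ≤ G * A := bound2 _ hsub measurableSet_Ioo
      _ ≤ (G * A / c₀) * base := hGA
      _ ≤ (1 + G * A / c₀) * base := by nlinarith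

/-- Pointwise Cauchy–Schwarz bound for `|u₀(r)|²` in the `n = 0` case of Lemma 3. -/
theorem stmt_3 (α : ℝ) (hα0 : 0 < α) (hα1 : α < 1)
    (k : ℤ) (A : ℝ) (hA0 : 0 < A) (hA1 : A < 1) :
    ∃ C : ℝ, 0 < C ∧ ∀ f : ℝ → ℂ, Measurable f → ∀ r ∈ Ioo (0 : ℝ) A,
      (∫⁻ ρ in Ioo r A, (‖f ρ‖₊ : ℝ≥0∞)) ^ 2 ≤
        ENNReal.ofReal C *
          (∫⁻ ρ in Ioo r A,
            (‖f ρ‖₊ : ℝ≥0∞) ^ 2 * ENNReal.ofReal ((-Real.log ρ) ^ (1 + k) * ρ ^ (1 + α))) *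
          ENNReal.ofReal (r ^ (-α) * (-Real.log r) ^ (-k)) := by
  obtain ⟨C₁, hC₁, hkey⟩ := aux_key α hα0 k A hA0 hA1
  refine ⟨C₁, hC₁, ?_⟩
  intro f hf r hr
  obtain ⟨hr0, hrA⟩ := hr
  have hr1 : r < 1 := hrA.trans hA1
  set μ : Measure ℝ := volume.restrict (Ioo r A) with hμ
  set W : ℝ → ℝ≥0∞ := fun ρ => ENNReal.ofReal ((-Real.log ρ) ^ (1 + k) * ρ ^ (1 + α)) with hWdef
  have hwmeas : Measurable fun ρ : ℝ => (-Real.log ρ) ^ (1 + k) * ρ ^ (1 + α) :=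
    ((measurable_zpow_real (1 + k)).comp Real.measurable_log.neg).mul
      (measurable_id.pow_const (1 + α))
  have hWmeas : Measurable W := ENNReal.measurable_ofReal.comp hwmeas
  have hφmeas : Measurable fun ρ => (‖f ρ‖₊ : ℝ≥0∞) := hf.nnnorm.coe_nnreal_ennreal
  have hwpos : ∀ x ∈ Ioo r A, 0 < (-Real.log x) ^ (1 + k) * x ^ (1 + α) := fun x hx =>
    mul_pos (zpow_pos (aux_pos (hr0.trans hx.1) (hx.2.trans hA1)) _)
      (Real.rpow_pos_of_pos (hr0.trans hx.1) _)
  set F1 : ℝ → ℝ≥0∞ := fun ρ => (‖f ρ‖₊ : ℝ≥0∞) * (W ρ) ^ (1/2 : ℝ) with hF1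
  set F2 : ℝ → ℝ≥0∞ := fun ρ => (W ρ)⁻¹ ^ (1/2 : ℝ) with hF2
  have hF1m : AEMeasurable F1 μ := (hφmeas.mul (hWmeas.pow_const _)).aemeasurable
  have hF2m : AEMeasurable F2 μ := (hWmeas.inv.pow_const _).aemeasurable
  have hconj : Real.HolderConjugate 2 2 := Real.HolderConjugate.two_two
  have holder := ENNReal.lintegral_mul_le_Lp_mul_Lq μ hconj hF1m hF2m
  have hmem : ∀ᵐ x ∂μ, x ∈ Ioo r A := ae_restrict_mem measurableSet_Ioo
  have heq0 : ∫⁻ ρ, (‖f ρ‖₊ : ℝ≥0∞) ∂μ = ∫⁻ a, (F1 * F2) a ∂μ := by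
    refine lintegral_congr_ae ?_
    filter_upwards [hmem] with x hx
    have hw0 : W x ≠ 0 := (ENNReal.ofReal_pos.mpr (hwpos x hx)).ne'
    have hwt : W x ≠ ⊤ := ENNReal.ofReal_ne_top
    have h1 : (W x) ^ (1/2 : ℝ) * ((W x)⁻¹) ^ (1/2 : ℝ) = 1 := by
      rw [← ENNReal.mul_rpow_of_nonneg _ _ (by norm_num : (0:ℝ) ≤ 1/2),
        ENNReal.mul_inv_cancel hw0 hwt, ENNReal.one_rpow]
    show (‖f x‖₊ : ℝ≥0∞) = F1 x * F2 x
    calc (‖f x‖₊ : ℝ≥0∞) = (‖f x‖₊ : ℝ≥0∞) * ((W x) ^ (1/2 : ℝ) * ((W x)⁻¹) ^ (1/2 : ℝ)) := by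
          rw [h1, mul_one]
      _ = F1 x * F2 x := (mul_assoc _ _ _).symm
  have heq1 : ∫⁻ a, F1 a ^ (2:ℝ) ∂μ = ∫⁻ ρ, (‖f ρ‖₊ : ℝ≥0∞) ^ 2 * W ρ ∂μ := by
    refine lintegral_congr fun x => ?_
    calc ((‖f x‖₊ : ℝ≥0∞) * W x ^ (1/2 : ℝ)) ^ (2:ℝ)
        = (‖f x‖₊ : ℝ≥0∞) ^ (2:ℝ) * (W x ^ (1/2 : ℝ)) ^ (2:ℝ) :=
          ENNReal.mul_rpow_of_nonneg _ _ (by norm_num)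
      _ = (‖f x‖₊ : ℝ≥0∞) ^ 2 * W x := by
          rw [← ENNReal.rpow_mul]
          norm_num
  have heq2 : ∫⁻ a, F2 a ^ (2:ℝ) ∂μ = ∫⁻ x, (W x)⁻¹ ∂μ := by
    refine lintegral_congr fun x => ?_
    show ((W x)⁻¹ ^ (1/2 : ℝ)) ^ (2:ℝ) = (W x)⁻¹
    rw [← ENNReal.rpow_mul]
    norm_num
  have hgpint : IntegrableOn (fun x : ℝ => x ^ (-(1+α)) * (-Real.log x) ^ (-(1+k))) (Ioo r A) :=
    ((aux_rpow_contOn _ hr0).mul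
      (aux_zpow_contOn _ hr0 hA1)).integrableOn_Icc.mono_set Ioo_subset_Icc_self
  have hgpnn : 0 ≤ᵐ[μ] fun x : ℝ => x ^ (-(1+α)) * (-Real.log x) ^ (-(1+k)) := by
    filter_upwards [hmem] with x hx
    exact (mul_pos (Real.rpow_pos_of_pos (hr0.trans hx.1) _)
      (zpow_pos (aux_pos (hr0.trans hx.1) (hx.2.trans hA1)) _)).le
  have hinv_eq : ∀ᵐ x ∂μ, (W x)⁻¹ =
      ENNReal.ofReal (x ^ (-(1+α)) * (-Real.log x) ^ (-(1+k))) := by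
    filter_upwards [hmem] with x hx
    have hx0 : 0 < x := hr0.trans hx.1
    have hwi : ((-Real.log x) ^ (1 + k) * x ^ (1 + α))⁻¹ =
        x ^ (-(1+α)) * (-Real.log x) ^ (-(1+k)) := by
      rw [mul_inv, ← zpow_neg, ← Real.rpow_neg hx0.le, mul_comm]
    rw [hWdef]
    rw [← hwi, ← ENNReal.ofReal_inv_of_pos (hwpos x hx)]
  have hWinv : ∫⁻ x, (W x)⁻¹ ∂μ ≤
      ENNReal.ofReal (C₁ * (r ^ (-α) * (-Real.log r) ^ (-k))) := by
    calc ∫⁻ x, (W x)⁻¹ ∂μ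
        = ∫⁻ x, ENNReal.ofReal (x ^ (-(1+α)) * (-Real.log x) ^ (-(1+k))) ∂μ :=
          lintegral_congr_ae hinv_eq
      _ = ENNReal.ofReal (∫ x, (fun x : ℝ => x ^ (-(1+α)) * (-Real.log x) ^ (-(1+k))) x ∂μ) :=
          (ofReal_integral_eq_lintegral_ofReal hgpint hgpnn).symm
      _ ≤ _ := ENNReal.ofReal_le_ofReal (hkey r ⟨hr0, hrA⟩)
  have main : (∫⁻ ρ, (‖f ρ‖₊ : ℝ≥0∞) ∂μ) ^ 2 ≤
      (∫⁻ ρ, (‖f ρ‖₊ : ℝ≥0∞) ^ 2 * W ρ ∂μ) *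
        ENNReal.ofReal (C₁ * (r ^ (-α) * (-Real.log r) ^ (-k))) := by
    calc (∫⁻ ρ, (‖f ρ‖₊ : ℝ≥0∞) ∂μ) ^ 2 = (∫⁻ a, (F1 * F2) a ∂μ) ^ 2 := by rw [heq0]
      _ ≤ ((∫⁻ a, F1 a ^ (2:ℝ) ∂μ) ^ (1/2 : ℝ) * (∫⁻ a, F2 a ^ (2:ℝ) ∂μ) ^ (1/2 : ℝ)) ^ 2 := by
          rw [pow_two, pow_two]; exact mul_le_mul' holder holder
      _ = (∫⁻ a, F1 a ^ (2:ℝ) ∂μ) * (∫⁻ a, F2 a ^ (2:ℝ) ∂μ) := by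
          rw [mul_pow]
          congr 1 <;>
            rw [← ENNReal.rpow_natCast _ 2, ← ENNReal.rpow_mul] <;>
            norm_num
      _ = (∫⁻ ρ, (‖f ρ‖₊ : ℝ≥0∞) ^ 2 * W ρ ∂μ) * (∫⁻ x, (W x)⁻¹ ∂μ) := by rw [heq1, heq2]
      _ ≤ _ := mul_le_mul_right hWinv _
  calc (∫⁻ ρ, (‖f ρ‖₊ : ℝ≥0∞) ∂μ) ^ 2
      ≤ (∫⁻ ρ, (‖f ρ‖₊ : ℝ≥0∞) ^ 2 * W ρ ∂μ) *
        ENNReal.ofReal (C₁ * (r ^ (-α) * (-Real.log r) ^ (-k))) := main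
    _ = ENNReal.ofReal C₁ * (∫⁻ ρ, (‖f ρ‖₊ : ℝ≥0∞) ^ 2 * W ρ ∂μ) *
        ENNReal.ofReal (r ^ (-α) * (-Real.log r) ^ (-k)) := by
        rw [ENNReal.ofReal_mul hC₁.le]; ring
end
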